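/- arXiv:0709.0800 — 10 statements merged into one kernel-verified Lean document; each statement's English description precedes it below -/
import Mathlib

section
/- Let G be a finite group of order s²t admitting a Kantor family (F, F*) of order (s,t) with t ≥ 2, and let H be a subgroup of G of order t³ such that |A* ∩ H| ≥ t² for all A* ∈ F* and |A ∩ H| ≥ t for all A ∈ F. Then in fact |A* ∩ H| = t² for every A* ∈ F* and |A ∩ H| = t for every A ∈ F. -/
open scoped Pointwise

/-- A Kantor family of order `(s,t)` for a group `G`:
families `A i` (of order `s`) and `Astar i` (of order `st`), `i : Fin (t+1)`,
with `A i ≤ Astar i`, the tangency condition `A i ⊓ Astar j = ⊥` for `i ≠ j`,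
and the triple condition `A i * A j ∩ A k = 1` for pairwise distinct `i, j, k`. -/
def IsKantorFamily {G : Type*} [Group G] (s t : ℕ)
    (A Astar : Fin (t + 1) → Subgroup G) : Prop :=
  (∀ i, Nat.card (A i) = s) ∧
  (∀ i, Nat.card (Astar i) = s * t) ∧
  (∀ i, A i ≤ Astar i) ∧
  (∀ i j, i ≠ j → A i ⊓ Astar j = ⊥) ∧
  (∀ i j k, i ≠ j → j ≠ k → i ≠ k →
    ∀ g ∈ (A i : Set G) * (A j : Set G), g ∈ A k → g = 1)

/-- If `K, L` are subgroups contained in a finite subgroup `H` with `K ⊓ L = ⊥`,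
then `|K| * |L| ≤ |H|`. -/
lemma aux_card_mul_le {G : Type*} [Group G] (H K L : Subgroup G)
    (hK : K ≤ H) (hL : L ≤ H) (hKL : K ⊓ L = ⊥) [Finite H] :
    Nat.card K * Nat.card L ≤ Nat.card H := by
  have hinj : Function.Injective
      (fun p : K × L => (⟨(p.1 : G) * (p.2 : G), H.mul_mem (hK p.1.2) (hL p.2.2)⟩ : H)) := by
    rintro ⟨⟨k1, hk1⟩, ⟨l1, hl1⟩⟩ ⟨⟨k2, hk2⟩, ⟨l2, hl2⟩⟩ h
    simp only [Subtype.mk.injEq] at h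
    have hm : k2⁻¹ * k1 ∈ K ⊓ L := by
      constructor
      · exact K.mul_mem (K.inv_mem hk2) hk1
      · have : k2⁻¹ * k1 = l2 * l1⁻¹ := by
          rw [eq_comm, mul_inv_eq_iff_eq_mul, mul_assoc, eq_comm,
            inv_mul_eq_iff_eq_mul, ← h]
        rw [this]
        exact L.mul_mem hl2 (L.inv_mem hl1)
    rw [hKL, Subgroup.mem_bot] at hm
    have hk : k1 = k2 := by
      have : k2 * (k2⁻¹ * k1) = k2 * 1 := by rw [hm]
      rwa [← mul_assoc, mul_inv_cancel, one_mul, mul_one] at this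
    subst hk
    have hl : l1 = l2 := mul_left_cancel h
    subst hl
    rfl
  calc Nat.card K * Nat.card L = Nat.card (K × L) := (Nat.card_prod _ _).symm
    _ ≤ Nat.card H := Nat.card_le_card_of_injective _ hinj

theorem stmt1 {G : Type*} [Group G] (s t : ℕ) (ht : 2 ≤ t)
    (hG : Nat.card G = s ^ 2 * t)
    (A Astar : Fin (t + 1) → Subgroup G) (hKF : IsKantorFamily s t A Astar)
    (H : Subgroup G) (hH : Nat.card H = t ^ 3)
    (h1 : ∀ i, t ^ 2 ≤ Nat.card ↥(Astar i ⊓ H))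
    (h2 : ∀ i, t ≤ Nat.card ↥(A i ⊓ H)) :
    (∀ i, Nat.card ↥(Astar i ⊓ H) = t ^ 2) ∧ (∀ i, Nat.card ↥(A i ⊓ H) = t) := by
  obtain ⟨hA, hAstar, hle, htang, htriple⟩ := hKF
  have ht0 : 0 < t := by omega
  have hHfin : Finite H := by
    apply Nat.finite_of_card_ne_zero
    rw [hH]; positivity
  have hne : ∀ i : Fin (t + 1), ∃ j, j ≠ i := by
    intro i
    by_cases h : i = 0
    · exact ⟨1, by simp [h]; omega⟩
    · exact ⟨0, fun h' => h h'.symm⟩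
  constructor
  · intro i
    obtain ⟨j, hj⟩ := hne i
    have hbot : (Astar i ⊓ H) ⊓ (A j ⊓ H) = ⊥ := by
      rw [eq_bot_iff, ← htang j i hj]
      intro x hx
      exact ⟨hx.2.1, hx.1.1⟩
    have := aux_card_mul_le H (Astar i ⊓ H) (A j ⊓ H) inf_le_right inf_le_right hbot
    rw [hH] at this
    have hb : Nat.card ↥(Astar i ⊓ H) * t ≤ t ^ 2 * t := by
      calc Nat.card ↥(Astar i ⊓ H) * t
          ≤ Nat.card ↥(Astar i ⊓ H) * Nat.card ↥(A j ⊓ H) :=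
            Nat.mul_le_mul_left _ (h2 j)
        _ ≤ t ^ 3 := this
        _ = t ^ 2 * t := by ring
    exact le_antisymm (Nat.le_of_mul_le_mul_right hb ht0) (h1 i)
  · intro i
    obtain ⟨j, hj⟩ := hne i
    have hbot : (A i ⊓ H) ⊓ (Astar j ⊓ H) = ⊥ := by
      rw [eq_bot_iff, ← htang i j hj.symm]
      intro x hx
      exact ⟨hx.1.1, hx.2.1⟩
    have := aux_card_mul_le H (A i ⊓ H) (Astar j ⊓ H) inf_le_right inf_le_right hbot
    rw [hH] at this
    have hb : Nat.card ↥(A i ⊓ H) * t ^ 2 ≤ t * t ^ 2 := by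
      calc Nat.card ↥(A i ⊓ H) * t ^ 2
          ≤ Nat.card ↥(A i ⊓ H) * Nat.card ↥(Astar j ⊓ H) :=
            Nat.mul_le_mul_left _ (h1 j)
        _ ≤ t ^ 3 := this
        _ = t * t ^ 2 := by ring
    exact le_antisymm (Nat.le_of_mul_le_mul_right hb (by positivity)) (h2 i)
end

section
/- Let G be a finite group of order s²t admitting a Kantor family (F, F*) of order (s,t), and let H ≤ G with |H| = t³ such that |A* ∩ H| ≥ t² for all A* ∈ F* and |A ∩ H| ≥ t for all A ∈ F. Then the families {A ∩ H : A ∈ F} and {A* ∩ H : A* ∈ F*} form a Kantor family of order (t,t) for H. -/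
open scoped Pointwise

/-- If two subgroups of a finite group intersect trivially, the product of their
cardinalities is at most the cardinality of the group. -/
lemma aux_card_mul_le_s2 {K : Type*} [Group K] [Finite K] (C D : Subgroup K)
    (h : C ⊓ D = ⊥) : Nat.card C * Nat.card D ≤ Nat.card K := by
  have hinj : Function.Injective (fun p : C × D => (p.1 : K) * (p.2 : K)) := by
    rintro ⟨⟨c₁, hc₁⟩, ⟨d₁, hd₁⟩⟩ ⟨⟨c₂, hc₂⟩, ⟨d₂, hd₂⟩⟩ hcd
    simp only at hcd
    have heq : c₂⁻¹ * c₁ = d₂ * d₁⁻¹ := by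
      calc c₂⁻¹ * c₁ = c₂⁻¹ * (c₁ * d₁) * d₁⁻¹ := by group
        _ = c₂⁻¹ * (c₂ * d₂) * d₁⁻¹ := by rw [hcd]
        _ = d₂ * d₁⁻¹ := by group
    have hmem : c₂⁻¹ * c₁ ∈ C ⊓ D := by
      refine Subgroup.mem_inf.mpr ⟨C.mul_mem (C.inv_mem hc₂) hc₁, ?_⟩
      rw [heq]
      exact D.mul_mem hd₂ (D.inv_mem hd₁)
    rw [h, Subgroup.mem_bot] at hmem
    have hc : c₂ = c₁ := inv_mul_eq_one.mp hmem
    have hd : d₁ = d₂ := mul_left_cancel (a := c₁) (by rw [hcd, hc])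
    simp [Prod.ext_iff, Subtype.ext_iff, hc, hd]
  calc Nat.card C * Nat.card D = Nat.card (C × D) := (Nat.card_prod _ _).symm
    _ ≤ Nat.card K := Nat.card_le_card_of_injective _ hinj

theorem stmt2 {G : Type*} [Group G] (s t : ℕ) (ht : 2 ≤ t)
    (hG : Nat.card G = s ^ 2 * t)
    (A Astar : Fin (t + 1) → Subgroup G) (hKF : IsKantorFamily s t A Astar)
    (H : Subgroup G) (hH : Nat.card H = t ^ 3)
    (h1 : ∀ i, t ^ 2 ≤ Nat.card ↥(Astar i ⊓ H))
    (h2 : ∀ i, t ≤ Nat.card ↥(A i ⊓ H)) :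
    IsKantorFamily t t (fun i => (A i).subgroupOf H)
      (fun i => (Astar i).subgroupOf H) := by
  obtain ⟨hA, hAs, hle, hdisj, htriple⟩ := hKF
  have ht0 : 0 < t := by omega
  have hHfin : Finite H := by
    refine (Nat.card_pos_iff.mp ?_).2
    rw [hH]; positivity
  -- cardinalities of the intersections as subgroups of H
  have cardA : ∀ i : Fin (t + 1),
      Nat.card ((A i).subgroupOf H) = Nat.card ↥(A i ⊓ H) := by
    intro i
    rw [← Subgroup.inf_subgroupOf_right (A i) H]
    exact Nat.card_congr (Subgroup.subgroupOfEquivOfLe inf_le_right).toEquiv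
  have cardAs : ∀ i : Fin (t + 1),
      Nat.card ((Astar i).subgroupOf H) = Nat.card ↥(Astar i ⊓ H) := by
    intro i
    rw [← Subgroup.inf_subgroupOf_right (Astar i) H]
    exact Nat.card_congr (Subgroup.subgroupOfEquivOfLe inf_le_right).toEquiv
  -- disjointness of the restricted subgroups
  have hdisj' : ∀ i j : Fin (t + 1), i ≠ j →
      (A i).subgroupOf H ⊓ (Astar j).subgroupOf H = ⊥ := by
    intro i j hij
    have : (A i).subgroupOf H ⊓ (Astar j).subgroupOf H
        = (A i ⊓ Astar j).subgroupOf H := rfl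
    rw [this, hdisj i j hij, Subgroup.bot_subgroupOf]
  -- the product bound forces the exact cardinalities
  have key : ∀ i j : Fin (t + 1), i ≠ j →
      Nat.card ((A i).subgroupOf H) = t ∧
      Nat.card ((Astar j).subgroupOf H) = t ^ 2 := by
    intro i j hij
    have hmul := aux_card_mul_le_s2 ((A i).subgroupOf H) ((Astar j).subgroupOf H)
      (hdisj' i j hij)
    rw [hH] at hmul
    have ha := h2 i
    have hb := h1 j
    rw [← cardA i] at ha
    rw [← cardAs j] at hb
    constructor
    · nlinarith [Nat.card ((A i).subgroupOf H), Nat.card ((Astar j).subgroupOf H)]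
    · nlinarith
  have hne : ∀ i : Fin (t + 1), ∃ j, j ≠ i := by
    intro i
    haveI : Nontrivial (Fin (t + 1)) := by
      apply Fin.nontrivial_iff_two_le.mpr; omega
    exact exists_ne i
  refine ⟨?_, ?_, ?_, ?_, ?_⟩
  · intro i
    obtain ⟨j, hj⟩ := hne i
    exact (key i j (fun h => hj h.symm)).1
  · intro i
    obtain ⟨j, hj⟩ := hne i
    have := (key j i hj).2
    simpa [pow_two] using this
  · intro i
    exact Subgroup.comap_mono (hle i)
  · exact hdisj'
  · intro i j k hij hjk hik g hg hgk
    obtain ⟨a, ha, b, hb, hab⟩ := hg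
    have hG1 : (g : G) = 1 := by
      apply htriple i j k hij hjk hik
      · refine ⟨(a : G), ha, (b : G), hb, ?_⟩
        rw [← hab]; rfl
      · exact hgk
    exact Subtype.ext hG1
end

section
/- Let p be a prime and let G be a group of order p⁵ admitting a Kantor family (F, F*) of order (p², p). Then no member of F is a normal subgroup of G. In particular, G is non-abelian. -/
open scoped Pointwise

theorem stmt3 {G : Type*} [Group G] (p : ℕ) (hp : p.Prime)
    (hG : Nat.card G = p ^ 5)
    (A Astar : Fin (p + 1) → Subgroup G)
    (hKF : IsKantorFamily (p ^ 2) p A Astar) :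
    (∀ i, ¬ (A i).Normal) ∧ ∃ a b : G, a * b ≠ b * a := by
  obtain ⟨hA, hAst, hle, htan, htri⟩ := hKF
  have hp2 : 2 ≤ p := hp.two_le
  have hfin : Finite G := Nat.finite_of_card_ne_zero (by rw [hG]; exact pow_ne_zero 5 hp.pos.ne')
  have hnorm : ∀ i, ¬ (A i).Normal := by
    intro i hN
    -- pick j k distinct from i and each other
    have h0 : (0 : ℕ) < p + 1 := by omega
    have h1 : (1 : ℕ) < p + 1 := by omega
    have h2 : (2 : ℕ) < p + 1 := by omega
    obtain ⟨j, k, hij, hik, hjk⟩ : ∃ j k : Fin (p+1), i ≠ j ∧ i ≠ k ∧ j ≠ k := by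
      by_cases e0 : i = ⟨0, h0⟩
      · exact ⟨⟨1, h1⟩, ⟨2, h2⟩, by simp [e0, Fin.ext_iff], by simp [e0, Fin.ext_iff],
          by simp [Fin.ext_iff]⟩
      · by_cases e1 : i = ⟨1, h1⟩
        · exact ⟨⟨0, h0⟩, ⟨2, h2⟩, by simp [e1, Fin.ext_iff], by simp [e1, Fin.ext_iff],
            by simp [Fin.ext_iff]⟩
        · exact ⟨⟨0, h0⟩, ⟨1, h1⟩, e0, e1, by simp [Fin.ext_iff]⟩
    -- trivial intersections
    have hinf : ∀ l, i ≠ l → A i ⊓ A l = ⊥ :=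
      fun l hl => le_bot_iff.mp (le_trans (inf_le_inf_left _ (hle l)) (le_of_eq (htan i l hl)))
    -- injective map
    set f : (A i) × (A j) × (A k) → G := fun x => (x.1 : G) * x.2.1 * x.2.2 with hf
    have hinj : Function.Injective f := by
      rintro ⟨⟨n1, hn1⟩, ⟨h1', hh1⟩, ⟨k1, hk1⟩⟩ ⟨⟨n2, hn2⟩, ⟨h2', hh2⟩, ⟨k2, hk2⟩⟩ heq
      simp only [hf] at heq
      have key : h2'⁻¹ * n2⁻¹ * n1 * h1' = k2 * k1⁻¹ := by
        apply mul_left_cancel (a := n2 * h2')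
        apply mul_right_cancel (b := k1)
        calc n2 * h2' * (h2'⁻¹ * n2⁻¹ * n1 * h1') * k1 = n1 * h1' * k1 := by group
          _ = n2 * h2' * k2 := heq
          _ = n2 * h2' * (k2 * k1⁻¹) * k1 := by group
      have hmemN : h2'⁻¹ * (n2⁻¹ * n1) * h2' ∈ A i := by
        have := hN.conj_mem (n2⁻¹ * n1) (mul_mem (inv_mem hn2) hn1) h2'⁻¹
        simpa using this
      have hmemL : h2'⁻¹ * n2⁻¹ * n1 * h1' ∈ (A i : Set G) * (A j : Set G) := by
        refine ⟨h2'⁻¹ * (n2⁻¹ * n1) * h2', hmemN, h2'⁻¹ * h1',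
          mul_mem ((A j).inv_mem hh2) hh1, ?_⟩
        group
      have hK : k2 * k1⁻¹ ∈ A k := mul_mem hk2 (inv_mem hk1)
      have hone : k2 * k1⁻¹ = 1 := htri i j k hij hjk (by exact hik)
        _ (key ▸ hmemL) hK
      have hk12 : k1 = k2 := by
        have := mul_inv_eq_one.mp hone; exact this.symm
      have heq2 : n1 * h1' = n2 * h2' := by
        have : n1 * h1' * k1 = n2 * h2' * k1 := by rw [heq, hk12]
        exact mul_right_cancel this
      have : n2⁻¹ * n1 ∈ A i ⊓ A j := by
        refine Subgroup.mem_inf.mpr ⟨?_, ?_⟩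
        · exact mul_mem ((A i).inv_mem hn2) hn1
        · have heq3 : n2⁻¹ * n1 = h2' * h1'⁻¹ := by
            apply mul_left_cancel (a := n2)
            apply mul_right_cancel (b := h1')
            calc n2 * (n2⁻¹ * n1) * h1' = n1 * h1' := by group
              _ = n2 * h2' := heq2
              _ = n2 * (h2' * h1'⁻¹) * h1' := by group
          rw [heq3]; exact mul_mem hh2 ((A j).inv_mem hh1)
      rw [hinf j hij] at this
      have hn12 : n1 = n2 := by
        have := Subgroup.mem_bot.mp this
        have : n2⁻¹ * n1 = 1 := this
        rw [inv_mul_eq_one] at this; exact this.symm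
      have hh12 : h1' = h2' := by
        rw [hn12] at heq2; exact mul_left_cancel heq2
      simp [hn12, hh12, hk12]
    have hcard := Nat.card_le_card_of_injective f hinj
    rw [Nat.card_prod, Nat.card_prod, hA i, hA j, hA k, hG] at hcard
    have : p ^ 6 ≤ p ^ 5 := by
      calc p ^ 6 = p ^ 2 * (p ^ 2 * p ^ 2) := by ring
      _ ≤ p ^ 5 := hcard
    have := (pow_lt_pow_right₀ (by omega : 1 < p) (by omega : 5 < 6))
    omega
  refine ⟨hnorm, ?_⟩
  by_contra hc
  push_neg at hc
  exact hnorm ⟨0, by omega⟩ ⟨fun n hn g => by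
    have : g * n * g⁻¹ = n := by rw [hc g n]; group
    rwa [this]⟩
end

section
/- Let G be a finite group of order p⁵ (p prime) admitting a Kantor family (F, F*) of order (p², p), and suppose |G'| = p where G' is the derived subgroup. Then every member of F ∪ F* is abelian. -/
open scoped Pointwise
open scoped commutatorElement

theorem KF_coatom_of_index_prime {G : Type*} [Group G] {H : Subgroup G} {p : ℕ} (hp : p.Prime)
    (h : H.index = p) : IsCoatom H := by
  constructor
  · intro htop
    rw [htop, Subgroup.index_top] at h
    exact hp.one_lt.ne h
  · intro K hK
    have hle : H ≤ K := hK.le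
    have hmul := Subgroup.relIndex_mul_index hle
    rw [h] at hmul
    have hdvd : K.index ∣ p := Dvd.intro_left _ hmul
    rcases hp.eq_one_or_self_of_dvd _ hdvd with h1 | h1
    · exact Subgroup.index_eq_one.mp h1
    · exfalso
      rw [h1, Nat.mul_eq_right hp.ne_zero] at hmul
      exact hK.ne (le_antisymm hle (Subgroup.relIndex_eq_one.mp hmul))

/-- In a group of order `p^3`, every subgroup of order `p^2` contains all commutators. -/
theorem KF_commutator_mem_of_card {H : Type*} [Group H] {p : ℕ} (hp : p.Prime)
    (hH : Nat.card H = p ^ 3) (B : Subgroup H) (hB : Nat.card B = p ^ 2) :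
    ∀ x y : H, ⁅x, y⁆ ∈ B := by
  haveI : Fact p.Prime := ⟨hp⟩
  haveI : Finite H := Nat.finite_of_card_ne_zero (by rw [hH]; exact pow_ne_zero _ hp.ne_zero)
  have hidx : B.index = p := by
    have hmul := B.card_mul_index
    rw [hB, hH, pow_succ] at hmul
    exact Nat.eq_of_mul_eq_mul_left (pow_pos hp.pos 2) hmul
  have hcoatom : IsCoatom B := KF_coatom_of_index_prime hp hidx
  have hpg : IsPGroup p H := IsPGroup.of_card hH
  haveI hnilp : Group.IsNilpotent H := hpg.isNilpotent
  haveI hBn : B.Normal := Subgroup.NormalizerCondition.normal_of_coatom B normalizerCondition_of_isNilpotent hcoatom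
  have hq : Nat.card (H ⧸ B) = p := hidx
  haveI : IsCyclic (H ⧸ B) := isCyclic_of_prime_card hq
  letI : CommGroup (H ⧸ B) := IsCyclic.commGroup
  intro x y
  rw [← QuotientGroup.eq_one_iff]
  have : ((⁅x, y⁆ : H) : H ⧸ B) = ⁅(x : H ⧸ B), (y : H ⧸ B)⁆ := by
    simp [commutatorElement_def]
  rw [this, commutatorElement_eq_one_iff_commute]
  exact mul_comm _ _

theorem stmt4 {G : Type*} [Group G] (p : ℕ) (hp : p.Prime)
    (hG : Nat.card G = p ^ 5)
    (A Astar : Fin (p + 1) → Subgroup G)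
    (hKF : IsKantorFamily (p ^ 2) p A Astar)
    (hG' : Nat.card (commutator G) = p) :
    (∀ i, IsMulCommutative (A i)) ∧ (∀ i, IsMulCommutative (Astar i)) := by
  haveI : Fact p.Prime := ⟨hp⟩
  haveI finG : Finite G := Nat.finite_of_card_ne_zero
    (by rw [hG]; exact pow_ne_zero _ hp.ne_zero)
  obtain ⟨hcardA, hcardAstar, hle, hinf, htriple⟩ := hKF
  have hAcomm : ∀ i, IsMulCommutative (A i) := fun i =>
    ⟨⟨fun a b => IsPGroup.commutative_of_card_eq_prime_sq (hcardA i) a b⟩⟩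
  refine ⟨hAcomm, ?_⟩
  intro i
  by_contra hnc
  have hnall : ¬ ∀ a b : ↥(Astar i), a * b = b * a := fun h => hnc ⟨⟨fun a b => h a b⟩⟩
  push_neg at hnall
  obtain ⟨a, b, hab⟩ := hnall
  -- all commutators of `Astar i` lie in `A i`
  have hcardH : Nat.card ↥(Astar i) = p ^ 3 := by rw [hcardAstar i]; ring
  have hBcard : Nat.card ((A i).subgroupOf (Astar i)) = p ^ 2 := by
    rw [← hcardA i]
    exact Nat.card_congr (Subgroup.subgroupOfEquivOfLe (hle i)).toEquiv
  have hcommB := KF_commutator_mem_of_card hp hcardH ((A i).subgroupOf (Astar i)) hBcard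
  have hcA : ⁅(a : G), (b : G)⁆ ∈ A i := by
    have h1 := hcommB a b
    rw [Subgroup.mem_subgroupOf] at h1
    simpa [commutatorElement_def] using h1
  have hcne : ⁅(a : G), (b : G)⁆ ≠ 1 := by
    intro h
    rw [commutatorElement_eq_one_iff_commute] at h
    exact hab (Subtype.ext (by simpa using h.eq))
  -- the commutator subgroup equals the cyclic group generated by this commutator
  have hcG'mem : ⁅(a : G), (b : G)⁆ ∈ commutator G := by
    rw [commutator_def]
    exact Subgroup.commutator_mem_commutator (Subgroup.mem_top _) (Subgroup.mem_top _)
  have hzle : Subgroup.zpowers ⁅(a : G), (b : G)⁆ ≤ commutator G :=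
    Subgroup.zpowers_le.mpr hcG'mem
  have hzcard : Nat.card (Subgroup.zpowers ⁅(a : G), (b : G)⁆) = p := by
    have hdvd : Nat.card (Subgroup.zpowers ⁅(a : G), (b : G)⁆) ∣ p :=
      hG' ▸ Subgroup.card_dvd_of_le hzle
    have hne1 : Nat.card (Subgroup.zpowers ⁅(a : G), (b : G)⁆) ≠ 1 := by
      rw [Nat.card_zpowers]
      simpa [orderOf_eq_one_iff] using hcne
    rcases hp.eq_one_or_self_of_dvd _ hdvd with h | h
    · exact absurd h hne1
    · exact h
  have hG'le : commutator G ≤ A i := by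
    have heq : Subgroup.zpowers ⁅(a : G), (b : G)⁆ = commutator G :=
      Subgroup.eq_of_le_of_card_ge hzle (by rw [hzcard, hG'])
    rw [← heq]
    exact Subgroup.zpowers_le.mpr hcA
  -- hence `A i` is normal in `G`
  haveI hAnormal : (A i).Normal := by
    constructor
    intro n hn g
    have h1 : ⁅g, n⁆ ∈ A i := by
      apply hG'le
      rw [commutator_def]
      exact Subgroup.commutator_mem_commutator (Subgroup.mem_top _) (Subgroup.mem_top _)
    have h2 : g * n * g⁻¹ = ⁅g, n⁆ * n := by group
    rw [h2]
    exact (A i).mul_mem h1 hn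
  -- pick two further indices
  obtain ⟨j, k, hji, hki, hjk⟩ : ∃ j k : Fin (p + 1), j ≠ i ∧ k ≠ i ∧ j ≠ k := by
    have h2 : 2 < p + 1 := by have := hp.two_le; omega
    set x0 : Fin (p + 1) := ⟨0, by omega⟩ with hx0
    set x1 : Fin (p + 1) := ⟨1, by omega⟩ with hx1
    set x2 : Fin (p + 1) := ⟨2, by omega⟩ with hx2
    have h01 : x0 ≠ x1 := by simp [hx0, hx1, Fin.ext_iff]
    have h02 : x0 ≠ x2 := by simp [hx0, hx2, Fin.ext_iff]
    have h12 : x1 ≠ x2 := by simp [hx1, hx2, Fin.ext_iff]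
    by_cases e0 : i = x0
    · exact ⟨x1, x2, by rw [e0]; exact h01.symm, by rw [e0]; exact h02.symm, h12⟩
    by_cases e1 : i = x1
    · exact ⟨x0, x2, by rw [e1]; exact h01, by rw [e1]; exact h12.symm, h02⟩
    · exact ⟨x0, x1, fun h => e0 h.symm, fun h => e1 h.symm, h01⟩
  have hij : i ≠ j := hji.symm
  have hik : i ≠ k := hki.symm
  -- the multiplication map `A i × A j × A k → G` is injective
  set f : ↥(A i) × ↥(A j) × ↥(A k) → G := fun t => (t.1 : G) * t.2.1 * t.2.2 with hf
  have hinj : Function.Injective f := by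
    rintro ⟨a₁, b₁, c₁⟩ ⟨a₂, b₂, c₂⟩ h
    simp only [hf] at h
    set u : G := (b₂ : G)⁻¹ * (a₂ : G)⁻¹ * a₁ * b₁ with hu
    have hu2 : (a₂ : G) * b₂ * u = (a₂ : G) * b₂ * ((c₂ : G) * (c₁ : G)⁻¹) := by
      have lhs : (a₂ : G) * b₂ * u = (a₁ : G) * b₁ := by rw [hu]; group
      have rhs : (a₂ : G) * b₂ * ((c₂ : G) * (c₁ : G)⁻¹) = (a₁ : G) * b₁ := by
        rw [show (a₂ : G) * b₂ * ((c₂ : G) * (c₁ : G)⁻¹)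
            = ((a₂ : G) * b₂ * c₂) * (c₁ : G)⁻¹ by group, ← h]
        group
      rw [lhs, rhs]
    have hu2' : u = (c₂ : G) * (c₁ : G)⁻¹ := mul_left_cancel hu2
    -- u lies in the set product A i * A j
    have hconj : (b₂ : G)⁻¹ * ((a₂ : G)⁻¹ * a₁) * ((b₂ : G)⁻¹)⁻¹ ∈ A i :=
      hAnormal.conj_mem _ ((A i).mul_mem ((A i).inv_mem a₂.2) a₁.2) _
    rw [inv_inv] at hconj
    have hy : (b₂ : G)⁻¹ * b₁ ∈ A j := (A j).mul_mem ((A j).inv_mem b₂.2) b₁.2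
    have hdecomp : ((b₂ : G)⁻¹ * ((a₂ : G)⁻¹ * a₁) * b₂) * ((b₂ : G)⁻¹ * b₁) = u := by
      rw [hu]; group
    have humem : u ∈ (A i : Set G) * (A j : Set G) :=
      ⟨_, hconj, _, hy, hdecomp⟩
    have huk : u ∈ A k := by
      rw [hu2']
      exact (A k).mul_mem c₂.2 ((A k).inv_mem c₁.2)
    have hu1 : u = 1 := htriple i j k hij hjk hik u humem huk
    -- deduce the components are equal
    have hc12 : c₁ = c₂ := by
      have : (c₂ : G) * (c₁ : G)⁻¹ = 1 := by rw [← hu2', hu1]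
      exact (Subtype.ext (mul_inv_eq_one.mp this)).symm
    have hab12 : (a₂ : G)⁻¹ * a₁ = (b₂ : G) * (b₁ : G)⁻¹ := by
      have h5 : (b₂ : G) * u * (b₁ : G)⁻¹ = (a₂ : G)⁻¹ * a₁ := by rw [hu]; group
      have h6 : (b₂ : G) * u * (b₁ : G)⁻¹ = (b₂ : G) * (b₁ : G)⁻¹ := by rw [hu1]; group
      rw [← h5, h6]
    have hmemi : (a₂ : G)⁻¹ * a₁ ∈ A i := (A i).mul_mem ((A i).inv_mem a₂.2) a₁.2
    have hmemj : (a₂ : G)⁻¹ * a₁ ∈ Astar j := by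
      rw [hab12]
      exact hle j ((A j).mul_mem b₂.2 ((A j).inv_mem b₁.2))
    have hbot : (a₂ : G)⁻¹ * a₁ ∈ (⊥ : Subgroup G) := by
      rw [← hinf i j hij]
      exact ⟨hmemi, hmemj⟩
    rw [Subgroup.mem_bot] at hbot
    have ha12 : a₁ = a₂ := (Subtype.ext (inv_mul_eq_one.mp hbot)).symm
    have hb12 : b₁ = b₂ := by
      have : (b₂ : G) * (b₁ : G)⁻¹ = 1 := by rw [← hab12, hbot]
      exact (Subtype.ext (mul_inv_eq_one.mp this)).symm
    simp [ha12, hb12, hc12]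
  -- cardinality contradiction
  have hcard6 : Nat.card (↥(A i) × ↥(A j) × ↥(A k)) = p ^ 6 := by
    rw [Nat.card_prod, Nat.card_prod, hcardA i, hcardA j, hcardA k]
    ring
  have hle6 : p ^ 6 ≤ p ^ 5 := by
    rw [← hcard6, ← hG]
    exact Nat.card_le_card_of_injective f hinj
  have hlt : p ^ 5 < p ^ 6 := Nat.pow_lt_pow_right hp.one_lt (by norm_num)
  omega
end

section
/- Let G be a finite group of order p⁵ (p prime) admitting a Kantor family (F, F*) of order (p², p), and suppose the Frattini subgroup Φ(G) has order p. Then every member of F ∪ F* is elementary abelian. Moreover, if p is odd, then G has exponent p. -/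
open scoped Pointwise

section Aux

variable {G : Type*} [Group G]

/-- Membership in the Frattini subgroup follows from membership in every maximal subgroup. -/
lemma mem_frattini_of_forall_coatom {x : G} (h : ∀ M : Subgroup G, IsCoatom M → x ∈ M) :
    x ∈ frattini G := by
  simp only [frattini, Order.radical, Subgroup.mem_iInf, Set.mem_setOf_eq]
  exact fun M hM => h M hM

/-- In a finite `p`-group, every maximal subgroup contains all `p`-th powers and
all commutators. -/
lemma coatom_pow_comm [Finite G] {p : ℕ} (hp : p.Prime) (hPG : IsPGroup p G)
    {M : Subgroup G} (hM : IsCoatom M) :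
    (∀ g : G, g ^ p ∈ M) ∧ (∀ x y : G, x * y * x⁻¹ * y⁻¹ ∈ M) := by
  haveI : Fact p.Prime := ⟨hp⟩
  haveI : Group.IsNilpotent G := hPG.isNilpotent
  haveI hnorm : M.Normal :=
    Subgroup.NormalizerCondition.normal_of_coatom M normalizerCondition_of_isNilpotent hM
  set π : G →* G ⧸ M := QuotientGroup.mk' M with hπ
  have hsurj : Function.Surjective π := QuotientGroup.mk'_surjective M
  obtain ⟨g0, hg0⟩ : ∃ g : G, g ∉ M := by
    by_contra h
    push_neg at h
    exact hM.1 ((Subgroup.eq_top_iff' M).mpr h)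
  have hq0 : π g0 ≠ 1 := by
    simpa [hπ, QuotientGroup.eq_one_iff] using hg0
  obtain ⟨k, hk⟩ := (hPG.to_quotient M) (π g0)
  -- find an element `y ≠ 1` of the quotient with `y ^ p = 1`
  have hy : ∃ y : G ⧸ M, y ≠ 1 ∧ y ^ p = 1 := by
    have main : ∀ (k : ℕ) (x : G ⧸ M), x ≠ 1 → x ^ p ^ k = 1 →
        ∃ y : G ⧸ M, y ≠ 1 ∧ y ^ p = 1 := by
      intro k
      induction k with
      | zero => intro x hx1 hx; exact absurd (by simpa using hx) hx1
      | succ k ih =>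
        intro x hx1 hx
        by_cases h1 : x ^ p ^ k = 1
        · exact ih x hx1 h1
        · exact ⟨x ^ p ^ k, h1, by rw [← pow_mul, ← pow_succ]; exact hx⟩
    exact main k (π g0) hq0 hk
  obtain ⟨y, hy1, hyp⟩ := hy
  -- `y` generates the quotient
  have hyt : ∀ q : G ⧸ M, ∃ n : ℤ, y ^ n = q := by
    have hlt : M < Subgroup.comap π (Subgroup.zpowers y) := by
      refine lt_of_le_of_ne (fun m hm => ?_) (fun he => ?_)
      · show π m ∈ Subgroup.zpowers y
        have : π m = 1 := by simpa [hπ, QuotientGroup.eq_one_iff] using hm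
        rw [this]; exact one_mem _
      · have h2 := congrArg (Subgroup.map π) he
        rw [Subgroup.map_comap_eq_self_of_surjective hsurj] at h2
        rw [hπ, QuotientGroup.map_mk'_self] at h2
        exact hy1 (Subgroup.zpowers_eq_bot.mp h2.symm)
    have htop : Subgroup.comap π (Subgroup.zpowers y) = ⊤ := hM.2 _ hlt
    intro q
    obtain ⟨g, rfl⟩ := hsurj q
    have : g ∈ Subgroup.comap π (Subgroup.zpowers y) := by rw [htop]; trivial
    obtain ⟨n, hn⟩ := Subgroup.mem_zpowers_iff.mp this
    exact ⟨n, hn⟩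
  have hall : ∀ q : G ⧸ M, q ^ p = 1 := by
    intro q
    obtain ⟨n, rfl⟩ := hyt q
    calc (y ^ n) ^ p = (y ^ p) ^ n := by
          rw [← zpow_natCast ((y : G ⧸ M) ^ n) p, ← zpow_mul, mul_comm, zpow_mul, zpow_natCast]
      _ = 1 := by rw [hyp, one_zpow]
  have habel : ∀ q r : G ⧸ M, q * r = r * q := by
    intro q r
    obtain ⟨m, rfl⟩ := hyt q
    obtain ⟨n, rfl⟩ := hyt r
    rw [← zpow_add, ← zpow_add, add_comm]
  constructor
  · intro g
    have h1 : π (g ^ p) = 1 := by rw [map_pow]; exact hall (π g)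
    exact (QuotientGroup.eq_one_iff _).mp h1
  · intro x y'
    have h1 : π (x * y' * x⁻¹ * y'⁻¹) = 1 := by
      rw [map_mul, map_mul, map_mul, map_inv, map_inv, habel (π x) (π y')]
      group
    exact (QuotientGroup.eq_one_iff _).mp h1

/-- A normal subgroup of prime order `p` in a finite `p`-group is central. -/
lemma le_center_of_card_prime [Finite G] {p : ℕ} (hp : p.Prime) (hPG : IsPGroup p G)
    {N : Subgroup G} [hNn : N.Normal] (hN : Nat.card N = p) : N ≤ Subgroup.center G := by
  haveI : Fact p.Prime := ⟨hp⟩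
  haveI : IsCyclic N := isCyclic_of_prime_card hN
  intro n hn
  rw [Subgroup.mem_center_iff]
  intro g
  have h1 : MulAut.conjNormal (H := N) g = 1 := by
    have hd1 : orderOf (MulAut.conjNormal (H := N) g) ∣ orderOf g :=
      orderOf_map_dvd _ g
    obtain ⟨k, hk⟩ := hPG g
    have hd1' : orderOf (MulAut.conjNormal (H := N) g) ∣ p ^ k :=
      hd1.trans (orderOf_dvd_of_pow_eq_one hk)
    have hd2 : orderOf (MulAut.conjNormal (H := N) g) ∣ p - 1 := by
      have h := orderOf_dvd_natCard (MulAut.conjNormal (H := N) g)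
      rwa [IsCyclic.card_mulAut, hN, Nat.totient_prime hp] at h
    have hcop : Nat.Coprime (p ^ k) (p - 1) := by
      apply Nat.Coprime.pow_left
      refine (Nat.Prime.coprime_iff_not_dvd hp).mpr (fun hdvd => ?_)
      have h2 : 2 ≤ p := hp.two_le
      have := Nat.le_of_dvd (by omega) hdvd
      omega
    have hdg : orderOf (MulAut.conjNormal (H := N) g) ∣ Nat.gcd (p ^ k) (p - 1) :=
      Nat.dvd_gcd hd1' hd2
    rw [hcop] at hdg
    exact orderOf_eq_one_iff.mp (Nat.dvd_one.mp hdg)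
  have h2 : (MulAut.conjNormal (H := N) g) ⟨n, hn⟩ = ⟨n, hn⟩ := by rw [h1]; rfl
  have h3 : g * n * g⁻¹ = n := by
    have := congrArg Subtype.val h2
    simpa [MulAut.conjNormal_apply] using this
  calc g * n = g * n * g⁻¹ * g := by group
    _ = n * g := by rw [h3]

/-- Semi-commutation power formula: if `b * a = a * b * c` with `c` central, then
`(a*b)^n = a^n * b^n * c^(n choose 2)`. -/
lemma semicomm_pow {a b c : G} (hc : ∀ x : G, c * x = x * c)
    (hba : b * a = a * b * c) (n : ℕ) :
    b ^ n * a = a * b ^ n * c ^ n ∧ (a * b) ^ n = a ^ n * b ^ n * c ^ n.choose 2 := by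
  have hcp : ∀ (x : G) (m : ℕ), c ^ m * x = x * c ^ m := by
    intro x m
    induction m with
    | zero => simp
    | succ m ih => rw [pow_succ, mul_assoc, hc, ← mul_assoc, ih, mul_assoc]
  induction n with
  | zero => simp
  | succ n ih =>
    obtain ⟨ih1, ih2⟩ := ih
    have key1 : b ^ (n+1) * a = a * b ^ (n+1) * c ^ (n+1) := by
      calc b ^ (n+1) * a = b * (b ^ n * a) := by rw [pow_succ', mul_assoc]
        _ = b * (a * b ^ n * c ^ n) := by rw [ih1]
        _ = (b * a) * (b ^ n * c ^ n) := by simp only [mul_assoc]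
        _ = (a * b * c) * (b ^ n * c ^ n) := by rw [hba]
        _ = a * (b * ((c * b ^ n) * c ^ n)) := by simp only [mul_assoc]
        _ = a * (b * ((b ^ n * c) * c ^ n)) := by rw [hc (b ^ n)]
        _ = (a * (b * b ^ n)) * (c * c ^ n) := by simp only [mul_assoc]
        _ = a * b ^ (n+1) * c ^ (n+1) := by rw [← pow_succ', ← pow_succ', mul_assoc]
    refine ⟨key1, ?_⟩
    have hch : (n+1).choose 2 = n + n.choose 2 := by
      rw [Nat.choose_succ_succ, Nat.choose_one_right]
    calc (a * b) ^ (n+1) = (a * b) ^ n * (a * b) := pow_succ _ _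
      _ = (a ^ n * b ^ n * c ^ n.choose 2) * (a * b) := by rw [ih2]
      _ = a ^ n * (b ^ n * (c ^ n.choose 2 * a)) * b := by simp only [mul_assoc]
      _ = a ^ n * (b ^ n * (a * c ^ n.choose 2)) * b := by rw [hcp a (n.choose 2)]
      _ = a ^ n * ((b ^ n * a) * c ^ n.choose 2) * b := by simp only [mul_assoc]
      _ = a ^ n * ((a * b ^ n * c ^ n) * c ^ n.choose 2) * b := by rw [ih1]
      _ = (a ^ n * a) * (b ^ n * ((c ^ n * c ^ n.choose 2) * b)) := by simp only [mul_assoc]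
      _ = (a ^ n * a) * (b ^ n * (c ^ (n + n.choose 2) * b)) := by rw [pow_add]
      _ = (a ^ n * a) * (b ^ n * (b * c ^ (n + n.choose 2))) := by rw [hcp b (n + n.choose 2)]
      _ = ((a ^ n * a) * (b ^ n * b)) * c ^ (n + n.choose 2) := by simp only [mul_assoc]
      _ = a ^ (n+1) * b ^ (n+1) * c ^ ((n+1).choose 2) := by
          rw [← pow_succ, ← pow_succ, hch]

end Aux

theorem stmt5 {G : Type*} [Group G] (p : ℕ) (hp : p.Prime)
    (hG : Nat.card G = p ^ 5)
    (A Astar : Fin (p + 1) → Subgroup G)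
    (hKF : IsKantorFamily (p ^ 2) p A Astar)
    (hPhi : Nat.card (frattini G) = p) :
    (∀ i, IsMulCommutative (A i) ∧ ∀ g ∈ A i, g ^ p = 1) ∧
    (∀ i, IsMulCommutative (Astar i) ∧ ∀ g ∈ Astar i, g ^ p = 1) ∧
    (Odd p → ∀ g : G, g ^ p = 1) := by
  obtain ⟨hA, hAstar, hle, hinter, htrip⟩ := hKF
  haveI : Fact p.Prime := ⟨hp⟩
  have hp2 : 2 ≤ p := hp.two_le
  have hfin : Finite G := Nat.finite_of_card_ne_zero (by
    rw [hG]; exact pow_ne_zero _ hp.pos.ne')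
  have hPG : IsPGroup p G := IsPGroup.of_card hG
  -- Frattini facts
  have hgp : ∀ g : G, g ^ p ∈ frattini G := fun g =>
    mem_frattini_of_forall_coatom (fun M hM => (coatom_pow_comm hp hPG hM).1 g)
  have hcm : ∀ x y : G, x * y * x⁻¹ * y⁻¹ ∈ frattini G := fun x y =>
    mem_frattini_of_forall_coatom (fun M hM => (coatom_pow_comm hp hPG hM).2 x y)
  have hcen : frattini G ≤ Subgroup.center G := le_center_of_card_prime hp hPG hPhi
  have hfrw : ∀ w ∈ frattini G, w ^ p = 1 := by
    intro w hw
    have h1 : (⟨w, hw⟩ : frattini G) ^ Nat.card (frattini G) = 1 :=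
      pow_card_eq_one'
    rw [hPhi] at h1
    have h2 := congrArg (Subtype.val) h1
    simpa using h2
  -- if the Frattini subgroup has a nontrivial element in H, it's contained in H
  have hFle : ∀ {w : G}, w ∈ frattini G → w ≠ 1 → ∀ {H : Subgroup G}, w ∈ H →
      frattini G ≤ H := by
    intro w hwf hw1 H hwH
    have hcard : Nat.card (Subgroup.zpowers w) = p := by
      rw [Nat.card_zpowers]
      have h1 : orderOf w ∣ p := by
        have h := orderOf_dvd_natCard (⟨w, hwf⟩ : frattini G)
        rwa [Subgroup.orderOf_mk, hPhi] at h
      rcases (Nat.dvd_prime hp).mp h1 with h | h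
      · exact absurd (orderOf_eq_one_iff.mp h) hw1
      · exact h
    have heq : Subgroup.zpowers w = frattini G :=
      Subgroup.eq_of_le_of_card_ge (Subgroup.zpowers_le.mpr hwf)
        (by rw [hPhi, hcard])
    rw [← heq]
    exact Subgroup.zpowers_le.mpr hwH
  -- index helper
  have hidx : ∀ k : Fin (p+1), ∃ i j : Fin (p+1), i ≠ j ∧ i ≠ k ∧ j ≠ k := by
    intro k
    have h0 : 0 < p + 1 := by omega
    have h1 : 1 < p + 1 := by omega
    have h2 : 2 < p + 1 := by omega
    by_cases hk0 : k = ⟨0, h0⟩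
    · exact ⟨⟨1, h1⟩, ⟨2, h2⟩, by simp [Fin.ext_iff], by simp [hk0, Fin.ext_iff],
        by simp [hk0, Fin.ext_iff]⟩
    · by_cases hk1 : k = ⟨1, h1⟩
      · exact ⟨⟨0, h0⟩, ⟨2, h2⟩, by simp [Fin.ext_iff], by simp [hk1, Fin.ext_iff],
          by simp [hk1, Fin.ext_iff]⟩
      · exact ⟨⟨0, h0⟩, ⟨1, h1⟩, by simp [Fin.ext_iff], Ne.symm hk0, Ne.symm hk1⟩
  -- KEY: the Frattini subgroup meets each A k trivially
  have hdisj : ∀ (k : Fin (p+1)) (w : G), w ∈ frattini G → w ∈ A k → w = 1 := by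
    intro k w hwf hwa
    by_contra hw1
    have hPhiA : frattini G ≤ A k := hFle hwf hw1 hwa
    obtain ⟨i, j, hij, hik, hjk⟩ := hidx k
    set f : (frattini G) × (A i) × (A j) → G :=
      fun t => (t.1 : G) * (t.2.1 : G) * (t.2.2 : G) with hf
    have hinj : Function.Injective f := by
      rintro ⟨⟨w1, hw1'⟩, ⟨a1, ha1⟩, ⟨b1, hb1⟩⟩ ⟨⟨w2, hw2'⟩, ⟨a2, ha2⟩, ⟨b2, hb2⟩⟩ h
      simp only [hf] at h
      have huc : w2⁻¹ * w1 ∈ Subgroup.center G :=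
        (Subgroup.center G).mul_mem ((Subgroup.center G).inv_mem (hcen hw2')) (hcen hw1')
      have hucm := Subgroup.mem_center_iff.mp huc
      have h4 : (w2⁻¹ * w1) * (a1 * b1) = a2 * b2 := by
        calc (w2⁻¹ * w1) * (a1 * b1) = w2⁻¹ * (w1 * a1 * b1) := by
              simp only [mul_assoc]
          _ = w2⁻¹ * (w2 * a2 * b2) := by rw [h]
          _ = a2 * b2 := by simp only [mul_assoc]; rw [inv_mul_cancel_left]
      have h5 : (w2⁻¹ * w1) * (a2⁻¹ * a1) = b2 * b1⁻¹ := by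
        apply mul_right_cancel (b := b1)
        calc (w2⁻¹ * w1) * (a2⁻¹ * a1) * b1 = ((w2⁻¹ * w1) * a2⁻¹) * (a1 * b1) := by
              simp only [mul_assoc]
          _ = (a2⁻¹ * (w2⁻¹ * w1)) * (a1 * b1) := by rw [← hucm a2⁻¹]
          _ = a2⁻¹ * ((w2⁻¹ * w1) * (a1 * b1)) := by simp only [mul_assoc]
          _ = a2⁻¹ * (a2 * b2) := by rw [h4]
          _ = b2 * b1⁻¹ * b1 := by rw [inv_mul_cancel_left, inv_mul_cancel_right]
      have hu1 : w2⁻¹ * w1 = 1 := by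
        apply htrip j i k (Ne.symm hij) hik hjk (w2⁻¹ * w1)
        · have he : w2⁻¹ * w1 = (b2 * b1⁻¹) * (a2⁻¹ * a1)⁻¹ := by
            rw [← h5, mul_inv_cancel_right]
          rw [he]
          exact Set.mul_mem_mul ((A j).mul_mem hb2 ((A j).inv_mem hb1))
            ((A i).inv_mem ((A i).mul_mem ((A i).inv_mem ha2) ha1))
        · exact hPhiA ((frattini G).mul_mem ((frattini G).inv_mem hw2') hw1')
      have hw12 : w2 = w1 := inv_mul_eq_one.mp hu1
      have h6 : a2⁻¹ * a1 = b2 * b1⁻¹ := by rw [← h5, hu1, one_mul]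
      have hmem : a2⁻¹ * a1 ∈ A i ⊓ Astar j := by
        refine ⟨(A i).mul_mem ((A i).inv_mem ha2) ha1, ?_⟩
        rw [h6]
        exact hle j ((A j).mul_mem hb2 ((A j).inv_mem hb1))
      rw [hinter i j hij] at hmem
      have ha12 : a2 = a1 := inv_mul_eq_one.mp hmem
      have hb12 : b2 = b1 := by
        have : b2 * b1⁻¹ = 1 := by rw [← h6, hmem]
        exact mul_inv_eq_one.mp this
      simp only [Prod.mk.injEq, Subtype.mk.injEq]
      exact ⟨hw12.symm, ha12.symm, hb12.symm⟩
    have hcards : Nat.card G ≤ Nat.card ((frattini G) × (A i) × (A j)) := by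
      rw [Nat.card_prod, Nat.card_prod, hPhi, hA i, hA j, hG]
      exact le_of_eq (by ring)
    have hbij := hinj.bijective_of_nat_card_le hcards
    have hsub : ∀ g ∈ A k, g ∈ frattini G := by
      intro g hg
      obtain ⟨⟨⟨w', hw'⟩, ⟨a, ha⟩, ⟨b, hb⟩⟩, hfeq⟩ := hbij.2 g
      simp only [hf] at hfeq
      have hab : w'⁻¹ * g = a * b := by rw [← hfeq]; simp only [mul_assoc]; rw [inv_mul_cancel_left]
      have hmem1 : w'⁻¹ * g ∈ (A i : Set G) * (A j : Set G) := by
        rw [hab]; exact Set.mul_mem_mul ha hb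
      have hmem2 : w'⁻¹ * g ∈ A k := (A k).mul_mem ((A k).inv_mem (hPhiA hw')) hg
      have h1 : w'⁻¹ * g = 1 := htrip i j k hij hjk hik _ hmem1 hmem2
      have : w' = g := inv_mul_eq_one.mp h1
      exact this ▸ hw'
    have hle2 : Nat.card (A k) ≤ Nat.card (frattini G) :=
      Subgroup.card_le_of_le (fun x hx => hsub x hx)
    rw [hA k, hPhi, pow_two] at hle2
    nlinarith
  -- commutativity and exponent for the A k
  have hAcomm : ∀ (k : Fin (p+1)) (x y : G), x ∈ A k → y ∈ A k → x * y = y * x := by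
    intro k x y hx hy
    have hmem : x * y * x⁻¹ * y⁻¹ ∈ A k :=
      (A k).mul_mem ((A k).mul_mem ((A k).mul_mem hx hy) ((A k).inv_mem hx)) ((A k).inv_mem hy)
    have h1 : x * y * x⁻¹ * y⁻¹ = 1 := hdisj k _ (hcm x y) hmem
    calc x * y = (x * y * x⁻¹ * y⁻¹) * (y * x) := by group
      _ = y * x := by rw [h1, one_mul]
  have hApow : ∀ (k : Fin (p+1)) (g : G), g ∈ A k → g ^ p = 1 := fun k g hg =>
    hdisj k _ (hgp g) ((A k).pow_mem hg p)
  -- commutativity and exponent for the Astar k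
  have hstar : ∀ k : Fin (p+1),
      (∀ x y : G, x ∈ Astar k → y ∈ Astar k → x * y = y * x) ∧
      (∀ g ∈ Astar k, g ^ p = 1) := by
    intro k
    by_cases hcase : ∀ w : G, w ∈ frattini G → w ∈ Astar k → w = 1
    · constructor
      · intro x y hx hy
        have hmem : x * y * x⁻¹ * y⁻¹ ∈ Astar k :=
          (Astar k).mul_mem ((Astar k).mul_mem ((Astar k).mul_mem hx hy)
            ((Astar k).inv_mem hx)) ((Astar k).inv_mem hy)
        have h1 : x * y * x⁻¹ * y⁻¹ = 1 := hcase _ (hcm x y) hmem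
        calc x * y = (x * y * x⁻¹ * y⁻¹) * (y * x) := by group
          _ = y * x := by rw [h1, one_mul]
      · intro g hg
        exact hcase _ (hgp g) ((Astar k).pow_mem hg p)
    · push_neg at hcase
      obtain ⟨w, hwf, hwk, hw1⟩ := hcase
      have hPhiK : frattini G ≤ Astar k := hFle hwf hw1 hwk
      set f2 : (A k) × (frattini G) → (Astar k) :=
        fun t => ⟨(t.1 : G) * (t.2 : G), (Astar k).mul_mem (hle k t.1.2) (hPhiK t.2.2)⟩ with hf2
      have hinj2 : Function.Injective f2 := by
        rintro ⟨⟨a1, ha1⟩, ⟨v1, hv1⟩⟩ ⟨⟨a2, ha2⟩, ⟨v2, hv2⟩⟩ h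
        simp only [hf2, Subtype.mk.injEq] at h
        have h6 : a2⁻¹ * a1 = v2 * v1⁻¹ := by
          apply mul_right_cancel (b := v1)
          calc a2⁻¹ * a1 * v1 = a2⁻¹ * (a1 * v1) := by rw [mul_assoc]
            _ = a2⁻¹ * (a2 * v2) := by rw [h]
            _ = v2 * v1⁻¹ * v1 := by rw [inv_mul_cancel_left, inv_mul_cancel_right]
        have hm1 : a2⁻¹ * a1 ∈ frattini G := by
          rw [h6]; exact (frattini G).mul_mem hv2 ((frattini G).inv_mem hv1)
        have h7 : a2⁻¹ * a1 = 1 := hdisj k _ hm1 ((A k).mul_mem ((A k).inv_mem ha2) ha1)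
        have ha12 : a2 = a1 := inv_mul_eq_one.mp h7
        have hv12 : v2 = v1 := by
          have : v2 * v1⁻¹ = 1 := by rw [← h6, h7]
          exact mul_inv_eq_one.mp this
        simp only [Prod.mk.injEq, Subtype.mk.injEq]
        exact ⟨ha12.symm, hv12.symm⟩
      have hcards2 : Nat.card (Astar k) ≤ Nat.card ((A k) × (frattini G)) := by
        rw [Nat.card_prod, hA k, hPhi, hAstar k]
      have hbij2 := hinj2.bijective_of_nat_card_le hcards2
      have hdec : ∀ g ∈ Astar k, ∃ a v : G, a ∈ A k ∧ v ∈ frattini G ∧ g = a * v := by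
        intro g hg
        obtain ⟨⟨⟨a, ha⟩, ⟨v, hv⟩⟩, he⟩ := hbij2.2 ⟨g, hg⟩
        refine ⟨a, v, ha, hv, ?_⟩
        have := congrArg Subtype.val he
        simp only [hf2] at this
        exact this.symm
      constructor
      · intro x y hx hy
        obtain ⟨a, v, ha, hv, rfl⟩ := hdec x hx
        obtain ⟨b, u, hb, hu, rfl⟩ := hdec y hy
        have hvb : Commute v b := ((Subgroup.mem_center_iff.mp (hcen hv)) b).symm
        have hua : Commute u a := ((Subgroup.mem_center_iff.mp (hcen hu)) a).symm
        have huv : Commute u v := ((Subgroup.mem_center_iff.mp (hcen hu)) v).symm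
        have hab : a * b = b * a := hAcomm k a b ha hb
        calc (a * v) * (b * u) = (a * b) * (v * u) := hvb.mul_mul_mul_comm a u
          _ = (b * a) * (u * v) := by rw [hab, huv.eq]
          _ = (b * u) * (a * v) := (hua.mul_mul_mul_comm b v).symm
      · intro g hg
        obtain ⟨a, v, ha, hv, rfl⟩ := hdec g hg
        have hav : Commute a v := (Subgroup.mem_center_iff.mp (hcen hv)) a
        rw [hav.mul_pow, hApow k a ha, hfrw v hv, one_mul]
  refine ⟨?_, ?_, ?_⟩
  · intro i
    refine ⟨⟨⟨fun a b => Subtype.ext ?_⟩⟩, fun g hg => hApow i g hg⟩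
    exact hAcomm i a b a.2 b.2
  · intro i
    refine ⟨⟨⟨fun a b => Subtype.ext ?_⟩⟩, fun g hg => (hstar i).2 g hg⟩
    exact (hstar i).1 a b a.2 b.2
  · intro hodd g
    -- decompose G = A i0 * Astar j0
    have h0 : 0 < p + 1 := by omega
    have h1 : 1 < p + 1 := by omega
    set i0 : Fin (p+1) := ⟨0, h0⟩
    set j0 : Fin (p+1) := ⟨1, h1⟩
    have hij0 : i0 ≠ j0 := by simp [i0, j0, Fin.ext_iff]
    set f3 : (A i0) × (Astar j0) → G := fun t => (t.1 : G) * (t.2 : G) with hf3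
    have hinj3 : Function.Injective f3 := by
      rintro ⟨⟨a1, ha1⟩, ⟨b1, hb1⟩⟩ ⟨⟨a2, ha2⟩, ⟨b2, hb2⟩⟩ h
      simp only [hf3] at h
      have h6 : a2⁻¹ * a1 = b2 * b1⁻¹ := by
        apply mul_right_cancel (b := b1)
        calc a2⁻¹ * a1 * b1 = a2⁻¹ * (a1 * b1) := by rw [mul_assoc]
          _ = a2⁻¹ * (a2 * b2) := by rw [h]
          _ = b2 * b1⁻¹ * b1 := by rw [inv_mul_cancel_left, inv_mul_cancel_right]
      have hmem : a2⁻¹ * a1 ∈ A i0 ⊓ Astar j0 := by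
        refine ⟨(A i0).mul_mem ((A i0).inv_mem ha2) ha1, ?_⟩
        rw [h6]
        exact (Astar j0).mul_mem hb2 ((Astar j0).inv_mem hb1)
      rw [hinter i0 j0 hij0] at hmem
      have ha12 : a2 = a1 := inv_mul_eq_one.mp hmem
      have hb12 : b2 = b1 := by
        have : b2 * b1⁻¹ = 1 := by rw [← h6, hmem]
        exact mul_inv_eq_one.mp this
      simp only [Prod.mk.injEq, Subtype.mk.injEq]
      exact ⟨ha12.symm, hb12.symm⟩
    have hcards3 : Nat.card G ≤ Nat.card ((A i0) × (Astar j0)) := by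
      rw [Nat.card_prod, hA i0, hAstar j0, hG]
      exact le_of_eq (by ring)
    have hbij3 := hinj3.bijective_of_nat_card_le hcards3
    obtain ⟨⟨⟨a, ha⟩, ⟨b, hb⟩⟩, hfeq⟩ := hbij3.2 g
    simp only [hf3] at hfeq
    subst hfeq
    -- the commutator
    set c : G := b⁻¹ * a⁻¹ * b * a with hc
    have hcf : c ∈ frattini G := by
      have := hcm b⁻¹ a⁻¹
      simpa [hc] using this
    have hccen : ∀ x : G, c * x = x * c := fun x =>
      ((Subgroup.mem_center_iff.mp (hcen hcf)) x).symm
    have hba : b * a = a * b * c := by rw [hc]; group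
    have hpow := (semicomm_pow hccen hba p).2
    rw [hpow, hApow i0 a ha, (hstar j0).2 b hb, one_mul, one_mul]
    -- c ^ (p choose 2) = 1
    have h2d : 2 ∣ p - 1 := by
      obtain ⟨m, hm⟩ := hodd
      omega
    have hch : p.choose 2 = p * ((p - 1) / 2) := by
      rw [Nat.choose_two_right, Nat.mul_div_assoc p h2d]
    rw [hch, pow_mul, hfrw c hcf, one_pow]
end

section
/- Let p be an odd prime and let G be an extraspecial group of order p⁵ admitting a Kantor family of order (p², p). Then G has exponent p and all members of the Kantor family are elementary abelian. -/
open scoped Pointwise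
open scoped commutatorElement

/-- A finite `p`-group `G` is extraspecial if its centre, derived subgroup and
Frattini subgroup coincide and have order `p`. -/
def IsExtraspecial (p : ℕ) (G : Type*) [Group G] : Prop :=
  Subgroup.center G = commutator G ∧ Subgroup.center G = frattini G ∧
    Nat.card (Subgroup.center G) = p


private lemma central_swap {G : Type*} [Group G] {z : G} (hz : ∀ g : G, z * g = g * z)
    (a b : G) : a * (z * b) = z * (a * b) := by
  rw [← mul_assoc, ← hz a, mul_assoc]

private lemma mul_eq_comm_mul {G : Type*} [Group G] (x y : G) :
    x * y = ⁅x, y⁆ * (y * x) := by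
  rw [commutatorElement_def]; group

private lemma comm_eq_of {G : Type*} [Group G] {x y z : G} (h : x * y = z * (y * x)) :
    ⁅x, y⁆ = z := by
  rw [commutatorElement_def, h]; group

private lemma aux_pow_mul {G : Type*} [Group G] {x y c : G}
    (hc : ∀ g : G, c * g = g * c) (h : y * x = c * (x * y)) (m : ℕ) :
    y ^ m * x = c ^ m * (x * y ^ m) := by
  induction m with
  | zero => simp
  | succ m ih =>
    calc y ^ (m+1) * x = y * (y ^ m * x) := by rw [pow_succ']; rw [mul_assoc]
      _ = y * (c ^ m * (x * y ^ m)) := by rw [ih]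
      _ = c ^ m * (y * (x * y ^ m)) := central_swap (fun g => Commute.pow_left (hc g) m) _ _
      _ = c ^ m * ((y * x) * y ^ m) := by rw [mul_assoc]
      _ = c ^ m * ((c * (x * y)) * y ^ m) := by rw [h]
      _ = c ^ m * (c * (x * (y * y ^ m))) := by simp [mul_assoc]
      _ = c ^ (m+1) * (x * y ^ (m+1)) := by rw [pow_succ c, pow_succ']; simp [mul_assoc, hc]

private lemma aux_mul_pow {G : Type*} [Group G] {x y c : G}
    (hc : ∀ g : G, c * g = g * c) (h : y * x = c * (x * y)) (n : ℕ) :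
    (x * y) ^ n = x ^ n * (y ^ n * c ^ n.choose 2) := by
  have hcp : ∀ m : ℕ, ∀ g : G, c ^ m * g = g * c ^ m :=
    fun m g => Commute.pow_left (hc g) m
  induction n with
  | zero => simp
  | succ n ih =>
    have hK : (n+1).choose 2 = n.choose 2 + n := by
      simp [Nat.choose_succ_succ, Nat.choose_one_right, Nat.add_comm]
    calc (x*y)^(n+1) = (x*y)^n * (x*y) := pow_succ _ n
      _ = x^n * (y^n * c^(n.choose 2)) * (x*y) := by rw [ih]
      _ = x^n * (y^n * (c^(n.choose 2) * (x*y))) := by simp [mul_assoc]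
      _ = x^n * (y^n * ((x*y) * c^(n.choose 2))) := by rw [hcp _ (x*y)]
      _ = x^n * ((y^n * x) * (y * c^(n.choose 2))) := by simp [mul_assoc]
      _ = x^n * ((c^n * (x * y^n)) * (y * c^(n.choose 2))) := by
            rw [aux_pow_mul hc h n]
      _ = x^n * (c^n * ((x * y^n) * (y * c^(n.choose 2)))) := by rw [mul_assoc]
      _ = c^n * (x^n * ((x * y^n) * (y * c^(n.choose 2)))) :=
            central_swap (hcp n) _ _
      _ = c^n * ((x^n * x) * ((y^n * y) * c^(n.choose 2))) := by simp [mul_assoc]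
      _ = (x^(n+1) * (y^(n+1) * c^(n.choose 2))) * c^n := by
            rw [hcp n]; simp [mul_assoc, pow_succ]
      _ = x^(n+1) * (y^(n+1) * (c^(n.choose 2) * c^n)) := by simp [mul_assoc]
      _ = x^(n+1) * (y^(n+1) * c^((n+1).choose 2)) := by rw [← pow_add, hK]

private lemma no_abelian_p4 {G : Type*} [Group G] [Finite G] {p : ℕ} (hp : p.Prime)
    (hG : Nat.card G = p ^ 5)
    (hcm : ∀ x y : G, ⁅x, y⁆ ∈ Subgroup.center G)
    (hZcard : Nat.card (Subgroup.center G) = p)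
    {H : Subgroup G} (hab : ∀ x ∈ H, ∀ y ∈ H, x * y = y * x)
    (hH : Nat.card H = p ^ 4) : False := by
  have hp1 : 1 < p := hp.one_lt
  have hcentral : ∀ z ∈ Subgroup.center G, ∀ a : G, z * a = a * z :=
    fun z hz a => (Subgroup.mem_center_iff.mp hz a).symm
  obtain ⟨g, hg⟩ : ∃ g, g ∉ H := by
    by_contra hcon; push_neg at hcon
    have htop : H = ⊤ := (Subgroup.eq_top_iff' H).mpr hcon
    rw [htop, Subgroup.card_top, hG] at hH
    have := Nat.pow_right_injective hp.two_le hH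
    omega
  let f : H →* Subgroup.center G :=
    { toFun := fun h => ⟨⁅g, (h : G)⁆, hcm g h⟩
      map_one' := by ext; simp
      map_mul' := by
        intro a b
        ext
        show ⁅g, ((a : G) * b)⁆ = ⁅g, (a : G)⁆ * ⁅g, (b : G)⁆
        have hda := hcentral _ (hcm g (b : G))
        apply comm_eq_of
        calc g * ((a : G) * b) = (g * a) * b := (mul_assoc _ _ _).symm
          _ = (⁅g, (a : G)⁆ * ((a : G) * g)) * b := by rw [← mul_eq_comm_mul]
          _ = ⁅g, (a : G)⁆ * ((a : G) * (g * b)) := by simp [mul_assoc]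
          _ = ⁅g, (a : G)⁆ * ((a : G) * (⁅g, (b : G)⁆ * ((b : G) * g))) := by
                rw [← mul_eq_comm_mul]
          _ = ⁅g, (a : G)⁆ * (⁅g, (b : G)⁆ * ((a : G) * ((b : G) * g))) := by
                rw [central_swap hda]
          _ = (⁅g, (a : G)⁆ * ⁅g, (b : G)⁆) * (((a : G) * b) * g) := by
                simp [mul_assoc] }
  have hker : p ^ 3 ≤ Nat.card f.ker := by
    have h1 : Nat.card H = Nat.card (H ⧸ f.ker) * Nat.card f.ker :=
      Subgroup.card_eq_card_quotient_mul_card_subgroup f.ker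
    have h2 : Nat.card (H ⧸ f.ker) = Nat.card f.range :=
      Nat.card_congr (QuotientGroup.quotientKerEquivRange f).toEquiv
    have h3 : Nat.card f.range ∣ p := by
      rw [← hZcard]; exact Subgroup.card_subgroup_dvd_card f.range
    have hq : Nat.card f.range ≤ p := Nat.le_of_dvd hp.pos h3
    have key : p * p ^ 3 ≤ p * Nat.card f.ker := by
      calc p * p ^ 3 = p ^ 4 := by ring
        _ = Nat.card f.range * Nat.card f.ker := by rw [← hH, h1, h2]
        _ ≤ p * Nat.card f.ker := Nat.mul_le_mul_right _ hq
    exact Nat.le_of_mul_le_mul_left key hp.pos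
  have hxex : ∃ x : H, x ∈ f.ker ∧ (x : G) ∉ Subgroup.center G := by
    by_contra hcon; push_neg at hcon
    have hinj : Function.Injective
        (fun x : f.ker => (⟨((x : H) : G), hcon x.1 x.2⟩ : Subgroup.center G)) := by
      intro a b hab'
      have h2 : ((a : H) : G) = ((b : H) : G) := by
        simpa using congrArg Subtype.val hab'
      exact Subtype.ext (Subtype.ext h2)
    have hle := Nat.card_le_card_of_injective _ hinj
    rw [hZcard] at hle
    have h1 : p ^ 3 ≤ p := le_trans hker hle
    have h2 : p ^ 1 < p ^ 3 := Nat.pow_lt_pow_right hp1 (by omega)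
    rw [pow_one] at h2
    omega
  obtain ⟨x, hxker, hxnc⟩ := hxex
  have hHle : H ≤ Subgroup.centralizer {(x : G)} := by
    intro h hh
    rw [Subgroup.mem_centralizer_iff]
    rintro y hy
    rw [Set.mem_singleton_iff] at hy; subst hy
    exact hab _ x.2 _ hh
  have hgc : g ∈ Subgroup.centralizer {(x : G)} := by
    rw [Subgroup.mem_centralizer_iff]
    rintro y hy
    rw [Set.mem_singleton_iff] at hy; subst hy
    have h1 : ⁅g, (x : G)⁆ = 1 := by
      rw [MonoidHom.mem_ker] at hxker
      exact congrArg Subtype.val hxker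
    have h2 := mul_eq_comm_mul g (x : G)
    rw [h1, one_mul] at h2
    exact h2.symm
  set C := Subgroup.centralizer {(x : G)} with hC
  have hHC : Nat.card H ∣ Nat.card C := Subgroup.card_dvd_of_le hHle
  have hCG : Nat.card C ∣ p ^ 5 := hG ▸ Subgroup.card_subgroup_dvd_card C
  obtain ⟨m, hm5, hmC⟩ := (Nat.dvd_prime_pow hp).mp hCG
  have h4m : 4 ≤ m := by
    have hd : p ^ 4 ∣ p ^ m := by rw [← hH, ← hmC]; exact hHC
    exact (Nat.pow_dvd_pow_iff_le_right hp1).mp hd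
  rcases eq_or_lt_of_le h4m with h4 | h5
  · have : H = C := Subgroup.eq_of_le_of_card_ge hHle (by rw [hmC, ← h4, hH])
    exact hg (this ▸ hgc)
  · have hm : m = 5 := le_antisymm hm5 h5
    have htop : C = ⊤ := Subgroup.eq_top_of_card_eq _ (by rw [hmC, hm, hG])
    apply hxnc
    rw [Subgroup.mem_center_iff]
    intro a
    have ha : a ∈ C := htop ▸ Subgroup.mem_top a
    exact (Subgroup.mem_centralizer_iff.mp ha _ rfl).symm

private lemma central_mul_comm {G : Type*} [Group G] {z w : G}
    (hz : ∀ g : G, z * g = g * z) (hw : ∀ g : G, w * g = g * w)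
    (a b : G) (hab : a * b = b * a) : (a * z) * (b * w) = (b * w) * (a * z) := by
  have e1 : (a*z)*(b*w) = (a*b)*(z*w) := by
    rw [mul_assoc, ← central_swap hz b w, ← mul_assoc]
  have e2 : (b*w)*(a*z) = (b*a)*(w*z) := by
    rw [mul_assoc, ← central_swap hw a z, ← mul_assoc]
  rw [e1, e2, hab, hz w]

private lemma card_sup_of_inf_bot {G : Type*} [Group G] [Finite G] (H N : Subgroup G)
    [N.Normal] (hinf : H ⊓ N = ⊥) :
    Nat.card ((H ⊔ N : Subgroup G)) = Nat.card H * Nat.card N := by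
  have hmem : ∀ x : H × N, (x.1 : G) * x.2 ∈ H ⊔ N := fun x =>
    Subgroup.mul_mem _ (Subgroup.mem_sup_left x.1.2) (Subgroup.mem_sup_right x.2.2)
  have hbij : Function.Bijective
      (fun x : H × N => (⟨(x.1 : G) * x.2, hmem x⟩ : (H ⊔ N : Subgroup G))) := by
    constructor
    · rintro ⟨a, z⟩ ⟨a', z'⟩ he
      have he' : (a : G) * z = (a' : G) * z' := by simpa using congrArg Subtype.val he
      have hu : ((a' : G)⁻¹ * a : G) ∈ H ⊓ N := by
        constructor
        · exact Subgroup.mul_mem _ (Subgroup.inv_mem _ a'.2) a.2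
        · have : (a' : G)⁻¹ * a = (z' : G) * (z : G)⁻¹ := by
            rw [inv_mul_eq_iff_eq_mul, ← mul_assoc, ← he', mul_assoc]
            simp
          rw [this]
          exact Subgroup.mul_mem _ z'.2 (Subgroup.inv_mem _ z.2)
      rw [hinf, Subgroup.mem_bot] at hu
      have ha : (a : G) = a' := by
        have := congrArg (fun t => (a' : G) * t) hu
        simpa using this
      have hz2 : (z : G) = z' := by
        apply mul_left_cancel (a := (a' : G))
        rw [← he', ha]
      exact Prod.ext (Subtype.ext ha) (Subtype.ext hz2)
    · rintro ⟨x, hx⟩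
      have hx' : x ∈ (H : Set G) * (N : Set G) := by
        rw [← Subgroup.mul_normal]; exact hx
      obtain ⟨a, ha, z, hz, hxe⟩ := hx'
      exact ⟨(⟨a, ha⟩, ⟨z, hz⟩), Subtype.ext hxe⟩
  rw [← Nat.card_prod]
  exact (Nat.card_congr (Equiv.ofBijective _ hbij)).symm

open scoped Pointwise

theorem stmt6 {G : Type*} [Group G] (p : ℕ) (hp : p.Prime) (hodd : Odd p)
    (hG : Nat.card G = p ^ 5) (hes : IsExtraspecial p G)
    (A Astar : Fin (p + 1) → Subgroup G)
    (hKF : IsKantorFamily (p ^ 2) p A Astar) :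
    (∀ g : G, g ^ p = 1) ∧
    (∀ i, IsMulCommutative (A i) ∧ ∀ g ∈ A i, g ^ p = 1) ∧
    (∀ i, IsMulCommutative (Astar i) ∧ ∀ g ∈ Astar i, g ^ p = 1) := by
  obtain ⟨hA, hAs, hAle, htan, -⟩ := hKF
  obtain ⟨hZC, -, hZcard⟩ := hes
  haveI : Fact p.Prime := ⟨hp⟩
  have hp1 : 1 < p := hp.one_lt
  have hfin : Finite G := Nat.finite_of_card_ne_zero (by rw [hG]; positivity)
  have hcm : ∀ x y : G, ⁅x, y⁆ ∈ Subgroup.center G := by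
    intro x y
    rw [hZC, commutator_def]
    exact Subgroup.commutator_mem_commutator (Subgroup.mem_top x) (Subgroup.mem_top y)
  have hcentral : ∀ z ∈ Subgroup.center G, ∀ a : G, z * a = a * z :=
    fun z hz a => (Subgroup.mem_center_iff.mp hz a).symm
  have hZpow : ∀ z ∈ Subgroup.center G, z ^ p = 1 := by
    intro z hz
    have h1 : (⟨z, hz⟩ : Subgroup.center G) ^ p = 1 := by
      rw [← hZcard]; exact pow_card_eq_one'
    simpa using congrArg Subtype.val h1
  have hpcen : ∀ x : G, x ^ p ∈ Subgroup.center G := by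
    intro x
    rw [Subgroup.mem_center_iff]
    intro a
    have hc := hcm x a
    have h2 := aux_pow_mul (hcentral _ hc) (mul_eq_comm_mul x a) p
    rw [hZpow _ hc, one_mul] at h2
    exact h2.symm
  have hmulpow : ∀ x y : G, (x * y) ^ p = x ^ p * y ^ p := by
    intro x y
    have hc := hcm y x
    have h2 := aux_mul_pow (hcentral _ hc) (mul_eq_comm_mul y x) p
    obtain ⟨k, hk⟩ := hodd
    have hch : p.choose 2 = p * k := by
      have h3 : 2 * k + 1 - 1 = 2 * k := by omega
      rw [Nat.choose_two_right, hk, h3]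
      have h4 : (2 * k + 1) * (2 * k) = ((2 * k + 1) * k) * 2 := by ring
      rw [h4, Nat.mul_div_cancel _ (by norm_num)]
    rw [hch, pow_mul, hZpow _ hc, one_pow, mul_one] at h2
    exact h2
  -- Step 2 : the centre is contained in every Astar j
  have hZle : ∀ j, Subgroup.center G ≤ Astar j := by
    intro j
    by_contra hcon
    have hIle : Subgroup.center G ⊓ Astar j ≤ Subgroup.center G := inf_le_left
    have hId : Nat.card (Subgroup.center G ⊓ Astar j : Subgroup G) ∣ p :=
      hZcard ▸ Subgroup.card_dvd_of_le hIle
    have hI1 : Subgroup.center G ⊓ Astar j = ⊥ := by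
      rcases hp.eq_one_or_self_of_dvd _ hId with h | h
      · exact Subgroup.card_eq_one.mp h
      · exfalso
        apply hcon
        have heq := Subgroup.eq_of_le_of_card_ge hIle (by rw [h, hZcard])
        rw [← heq]
        exact inf_le_right
    have habA : ∀ x ∈ Astar j, ∀ y ∈ Astar j, x * y = y * x := by
      intro x hx y hy
      have hmem : ⁅x, y⁆ ∈ Astar j := by
        rw [commutatorElement_def]
        exact mul_mem (mul_mem (mul_mem hx hy) (inv_mem hx)) (inv_mem hy)
      have h1 : ⁅x, y⁆ ∈ (⊥ : Subgroup G) := hI1 ▸ Subgroup.mem_inf.mpr ⟨hcm x y, hmem⟩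
      have h2 : ⁅x, y⁆ = 1 := Subgroup.mem_bot.mp h1
      have h3 := mul_eq_comm_mul x y
      rw [h2, one_mul] at h3
      exact h3
    have hinf2 : Astar j ⊓ Subgroup.center G = ⊥ := by rw [inf_comm]; exact hI1
    have hcard4 : Nat.card ((Astar j ⊔ Subgroup.center G : Subgroup G)) = p ^ 4 := by
      rw [card_sup_of_inf_bot _ _ hinf2, hAs j, hZcard]; ring
    have habH : ∀ x ∈ (Astar j ⊔ Subgroup.center G : Subgroup G),
        ∀ y ∈ (Astar j ⊔ Subgroup.center G : Subgroup G), x * y = y * x := by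
      intro x hx y hy
      have hx' : x ∈ (Astar j : Set G) * (Subgroup.center G : Set G) := by
        rw [← Subgroup.mul_normal]; exact hx
      have hy' : y ∈ (Astar j : Set G) * (Subgroup.center G : Set G) := by
        rw [← Subgroup.mul_normal]; exact hy
      obtain ⟨a, ha, z, hz, hxe⟩ := hx'
      obtain ⟨b, hb, w, hw, hye⟩ := hy'
      rw [← hxe, ← hye]
      exact central_mul_comm (hcentral _ hz) (hcentral _ hw) a b (habA a ha b hb)
    exact no_abelian_p4 hp hG hcm hZcard habH hcard4
  -- a nonzero index
  have hone : (1 : Fin (p + 1)) ≠ 0 := by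
    intro hc
    have h1 : (1 : Fin (p + 1)).val = 1 := by
      rw [Fin.val_one']
      exact Nat.mod_eq_of_lt (by omega)
    have := congrArg Fin.val hc
    rw [h1, Fin.val_zero] at this
    omega
  -- Step 3 : A i meets the centre trivially
  have hAZ : ∀ i, A i ⊓ Subgroup.center G = ⊥ := by
    intro i
    obtain ⟨j, hj⟩ : ∃ j : Fin (p + 1), i ≠ j := by
      rcases eq_or_ne i 0 with h | h
      · exact ⟨1, by rw [h]; exact (Ne.symm hone)⟩
      · exact ⟨0, h⟩
    have hle : A i ⊓ Subgroup.center G ≤ A i ⊓ Astar j :=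
      le_inf inf_le_left (le_trans inf_le_right (hZle j))
    rw [htan i j hj] at hle
    exact le_bot_iff.mp hle
  -- Step 4 : elements of A i have order dividing p
  have hApow : ∀ i, ∀ a ∈ A i, a ^ p = 1 := by
    intro i a ha
    have h1 : a ^ p ∈ A i ⊓ Subgroup.center G :=
      Subgroup.mem_inf.mpr ⟨pow_mem ha p, hpcen a⟩
    rw [hAZ i] at h1
    exact Subgroup.mem_bot.mp h1
  -- Step 5 : the p-th power map is trivial
  let θ : G →* G := MonoidHom.mk' (fun g => g ^ p) hmulpow
  have hmain : ∀ g : G, g ^ p = 1 := by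
    have hmem : ∀ x : (A 0) × (A 1) × Subgroup.center G,
        (x.1 : G) * x.2.1 * x.2.2 ∈ θ.ker := by
      intro x
      rw [MonoidHom.mem_ker]
      show ((x.1 : G) * x.2.1 * x.2.2) ^ p = 1
      rw [hmulpow, hmulpow, hApow 0 _ x.1.2, hApow 1 _ x.2.1.2, hZpow _ x.2.2.2]
      simp
    have hinj : Function.Injective (fun x : (A 0) × (A 1) × Subgroup.center G =>
        (⟨(x.1 : G) * x.2.1 * x.2.2, hmem x⟩ : θ.ker)) := by
      rintro ⟨a, b, z⟩ ⟨a', b', z'⟩ he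
      have he' : (a : G) * b * z = (a' : G) * b' * z' := by
        simpa using congrArg Subtype.val he
      have hz := hcentral _ z.2
      have hz' := hcentral _ z'.2
      have hcz : ∀ g : G, ((z' : G) * (z : G)⁻¹) * g = g * ((z' : G) * (z : G)⁻¹) :=
        hcentral _ (mul_mem z'.2 (inv_mem z.2))
      have key : ((b' : G) * (b : G)⁻¹) * ((z' : G) * (z : G)⁻¹) * ((b : G) * z)
          = (b' : G) * z' := by
        calc ((b' : G) * (b : G)⁻¹) * ((z' : G) * (z : G)⁻¹) * ((b : G) * z)
            = ((b' : G) * (b : G)⁻¹) * (((z' : G) * (z : G)⁻¹) * ((b : G) * z)) := by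
              rw [mul_assoc]
          _ = ((b' : G) * (b : G)⁻¹) * (((b : G) * z) * ((z' : G) * (z : G)⁻¹)) := by
              rw [hcz]
          _ = (b' : G) * ((z : G) * ((z' : G) * (z : G)⁻¹)) := by simp [mul_assoc]
          _ = (b' : G) * (((z : G) * z') * (z : G)⁻¹) := by rw [mul_assoc]
          _ = (b' : G) * (((z' : G) * z) * (z : G)⁻¹) := by rw [← hz' (z : G)]
          _ = (b' : G) * z' := by simp [mul_assoc]
      have hu : ((a' : G)⁻¹ * a) ∈ A 0 ⊓ Astar 1 := by
        refine Subgroup.mem_inf.mpr ⟨?_, ?_⟩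
        · exact mul_mem (inv_mem a'.2) a.2
        · have heq : (a' : G)⁻¹ * a = ((b' : G) * (b : G)⁻¹) * ((z' : G) * (z : G)⁻¹) := by
            rw [inv_mul_eq_iff_eq_mul]
            apply mul_right_cancel (b := (b : G) * z)
            calc (a : G) * ((b : G) * z) = (a : G) * b * z := by rw [mul_assoc]
              _ = (a' : G) * b' * z' := he'
              _ = (a' : G) * ((b' : G) * z') := by rw [mul_assoc]
              _ = (a' : G) * (((b' : G) * (b : G)⁻¹) * ((z' : G) * (z : G)⁻¹) * ((b : G) * z)) := by
                  rw [key]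
              _ = (a' : G) * (((b' : G) * (b : G)⁻¹) * ((z' : G) * (z : G)⁻¹)) * ((b : G) * z) := by
                  simp [mul_assoc]
          rw [heq]
          exact mul_mem (hAle 1 (mul_mem b'.2 (inv_mem b.2)))
            (hZle 1 (mul_mem z'.2 (inv_mem z.2)))
      rw [htan 0 1 (Ne.symm hone), Subgroup.mem_bot] at hu
      have ha : (a : G) = a' := by
        have := congrArg (fun t => (a' : G) * t) hu
        simpa using this
      have hbz : (b : G) * z = (b' : G) * z' := by
        apply mul_left_cancel (a := (a' : G))
        calc (a' : G) * ((b : G) * z) = (a : G) * b * z := by rw [← ha, mul_assoc]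
          _ = (a' : G) * b' * z' := he'
          _ = (a' : G) * ((b' : G) * z') := by rw [mul_assoc]
      have hv : ((b' : G)⁻¹ * b) ∈ A 1 ⊓ Astar 0 := by
        refine Subgroup.mem_inf.mpr ⟨?_, ?_⟩
        · exact mul_mem (inv_mem b'.2) b.2
        · have heq : (b' : G)⁻¹ * b = (z' : G) * (z : G)⁻¹ := by
            rw [inv_mul_eq_iff_eq_mul, ← mul_assoc, ← hbz, mul_assoc]
            simp
          rw [heq]
          exact hZle 0 (mul_mem z'.2 (inv_mem z.2))
      rw [htan 1 0 hone, Subgroup.mem_bot] at hv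
      have hb : (b : G) = b' := by
        have := congrArg (fun t => (b' : G) * t) hv
        simpa using this
      have hzz : (z : G) = z' := by
        apply mul_left_cancel (a := (b' : G))
        rw [← hbz, hb]
      exact Prod.ext (Subtype.ext ha) (Prod.ext (Subtype.ext hb) (Subtype.ext hzz))
    have hcard : p ^ 5 ≤ Nat.card θ.ker := by
      have hle := Nat.card_le_card_of_injective _ hinj
      rw [Nat.card_prod, Nat.card_prod, hA 0, hA 1, hZcard] at hle
      calc p ^ 5 = p ^ 2 * (p ^ 2 * p) := by ring
        _ ≤ _ := hle
    have hktop : θ.ker = ⊤ := by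
      apply Subgroup.eq_top_of_card_eq
      refine le_antisymm (Nat.le_of_dvd Nat.card_pos
        ((Subgroup.card_subgroup_dvd_card _))) ?_
      rw [hG]; exact hcard
    intro g
    have hg : g ∈ θ.ker := hktop ▸ Subgroup.mem_top g
    rw [MonoidHom.mem_ker] at hg
    exact hg
  -- A i is commutative
  have hAcomm : ∀ i, IsMulCommutative (A i) := by
    intro i
    exact ⟨⟨IsPGroup.commutative_of_card_eq_prime_sq (hA i)⟩⟩
  -- Astar i = A i ⊔ centre
  have hAstar_eq : ∀ i, (A i ⊔ Subgroup.center G : Subgroup G) = Astar i := by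
    intro i
    have hle : (A i ⊔ Subgroup.center G : Subgroup G) ≤ Astar i := sup_le (hAle i) (hZle i)
    have hcards : Nat.card ((A i ⊔ Subgroup.center G : Subgroup G)) = p ^ 2 * p := by
      rw [card_sup_of_inf_bot _ _ (hAZ i), hA i, hZcard]
    exact Subgroup.eq_of_le_of_card_ge hle (by rw [hcards, hAs i])
  have hAscomm : ∀ i, IsMulCommutative (Astar i) := by
    intro i
    constructor
    constructor
    intro x y
    apply Subtype.ext
    have hx' : (x : G) ∈ (A i : Set G) * (Subgroup.center G : Set G) := by
      rw [← Subgroup.mul_normal, hAstar_eq i]; exact x.2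
    have hy' : (y : G) ∈ (A i : Set G) * (Subgroup.center G : Set G) := by
      rw [← Subgroup.mul_normal, hAstar_eq i]; exact y.2
    obtain ⟨a, ha, z, hz, hxe⟩ := hx'
    obtain ⟨b, hb, w, hw, hye⟩ := hy'
    show (x : G) * y = (y : G) * x
    rw [← hxe, ← hye]
    have hab : a * b = b * a := by
      have := (hAcomm i).is_comm.comm ⟨a, ha⟩ ⟨b, hb⟩
      simpa using congrArg Subtype.val this
    exact central_mul_comm (hcentral _ hz) (hcentral _ hw) a b hab
  exact ⟨hmain, fun i => ⟨hAcomm i, fun g _ => hmain g⟩,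
    fun i => ⟨hAscomm i, fun g _ => hmain g⟩⟩
end

section
/- Let p be a prime and let G be a finite p-group of nilpotency class 2 generated by three elements x, y, z, with derived subgroup G' elementary abelian of order p². Then there exist generators x', y', z' of G such that [y', z'] = 1 and G' = ⟨[x',y'], [x',z']⟩. -/
open scoped commutatorElement
open scoped IsMulCommutative

section Aux

variable {G : Type*} [Group G]

private lemma aux_mem_comm (a b : G) : ⁅a, b⁆ ∈ commutator G := by
  rw [commutator_def]
  exact Subgroup.commutator_mem_commutator (Subgroup.mem_top a) (Subgroup.mem_top b)

private lemma aux_conj (hc : ∀ a ∈ commutator G, ∀ b : G, Commute a b)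
    {a : G} (ha : a ∈ commutator G) (g : G) : g * a * g⁻¹ = a := by
  rw [← (hc a ha g).eq, mul_inv_cancel_right]

private lemma aux_mul_left (hc : ∀ a ∈ commutator G, ∀ b : G, Commute a b)
    (a b c : G) : ⁅a * b, c⁆ = ⁅a, c⁆ * ⁅b, c⁆ := by
  have h1 : ⁅a * b, c⁆ = (a * ⁅b, c⁆ * a⁻¹) * ⁅a, c⁆ := by group
  rw [h1, aux_conj hc (aux_mem_comm b c) a, (hc _ (aux_mem_comm b c) _).eq]

private lemma aux_mul_right (hc : ∀ a ∈ commutator G, ∀ b : G, Commute a b)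
    (a b c : G) : ⁅a, b * c⁆ = ⁅a, b⁆ * ⁅a, c⁆ := by
  have h1 : ⁅a, b * c⁆ = ⁅a, b⁆ * (b * ⁅a, c⁆ * b⁻¹) := by group
  rw [h1, aux_conj hc (aux_mem_comm a c) b]

private lemma aux_inv_left (hc : ∀ a ∈ commutator G, ∀ b : G, Commute a b)
    (a c : G) : ⁅a⁻¹, c⁆ = ⁅a, c⁆⁻¹ := by
  have h1 : ⁅a⁻¹ * a, c⁆ = ⁅a⁻¹, c⁆ * ⁅a, c⁆ := aux_mul_left hc _ _ _
  rw [inv_mul_cancel, commutatorElement_one_left] at h1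
  exact eq_inv_of_mul_eq_one_left h1.symm

private lemma aux_inv_right (hc : ∀ a ∈ commutator G, ∀ b : G, Commute a b)
    (a c : G) : ⁅a, c⁻¹⁆ = ⁅a, c⁆⁻¹ := by
  have h1 : ⁅a, c⁻¹ * c⁆ = ⁅a, c⁻¹⁆ * ⁅a, c⁆ := aux_mul_right hc _ _ _
  rw [inv_mul_cancel, commutatorElement_one_right] at h1
  exact eq_inv_of_mul_eq_one_left h1.symm

private lemma aux_pow_left (hc : ∀ a ∈ commutator G, ∀ b : G, Commute a b)
    (a c : G) (n : ℕ) : ⁅a ^ n, c⁆ = ⁅a, c⁆ ^ n := by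
  induction n with
  | zero => simp [commutatorElement_one_left]
  | succ k ih => rw [pow_succ, aux_mul_left hc, ih, pow_succ]

private lemma aux_zpow_left (hc : ∀ a ∈ commutator G, ∀ b : G, Commute a b)
    (a c : G) (n : ℤ) : ⁅a ^ n, c⁆ = ⁅a, c⁆ ^ n := by
  cases n with
  | ofNat k => simpa using aux_pow_left hc a c k
  | negSucc k => rw [zpow_negSucc, zpow_negSucc, aux_inv_left hc, aux_pow_left hc]

private lemma aux_pow_right (hc : ∀ a ∈ commutator G, ∀ b : G, Commute a b)
    (a c : G) (n : ℕ) : ⁅a, c ^ n⁆ = ⁅a, c⁆ ^ n := by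
  induction n with
  | zero => simp [commutatorElement_one_right]
  | succ k ih => rw [pow_succ, aux_mul_right hc, ih, pow_succ]

private lemma aux_zpow_right (hc : ∀ a ∈ commutator G, ∀ b : G, Commute a b)
    (a c : G) (n : ℤ) : ⁅a, c ^ n⁆ = ⁅a, c⁆ ^ n := by
  cases n with
  | ofNat k => simpa using aux_pow_right hc a c k
  | negSucc k => rw [zpow_negSucc, zpow_negSucc, aux_inv_right hc, aux_pow_right hc]

/-- The commutator subgroup is generated by commutators of the generators. -/
private lemma aux_commutator_eq_closure (hc : ∀ a ∈ commutator G, ∀ b : G, Commute a b)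
    (x y z : G) (hgen : Subgroup.closure {x, y, z} = ⊤) :
    commutator G = Subgroup.closure {⁅x, y⁆, ⁅x, z⁆, ⁅y, z⁆} := by
  set H := Subgroup.closure ({⁅x, y⁆, ⁅x, z⁆, ⁅y, z⁆} : Set G) with hH
  have hu : ⁅x, y⁆ ∈ H := Subgroup.subset_closure (by simp)
  have hv : ⁅x, z⁆ ∈ H := Subgroup.subset_closure (by simp)
  have hw : ⁅y, z⁆ ∈ H := Subgroup.subset_closure (by simp)
  apply le_antisymm
  · rw [commutator_def, ← hgen, Subgroup.commutator_le]
    intro g hg h hh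
    induction hg, hh using Subgroup.closure_induction₂ with
    | mem a b ha hb =>
        simp only [Set.mem_insert_iff, Set.mem_singleton_iff] at ha hb
        rcases ha with rfl | rfl | rfl <;> rcases hb with rfl | rfl | rfl
        · rw [commutatorElement_self]; exact one_mem H
        · exact hu
        · exact hv
        · rw [← commutatorElement_inv]; exact inv_mem hu
        · rw [commutatorElement_self]; exact one_mem H
        · exact hw
        · rw [← commutatorElement_inv]; exact inv_mem hv
        · rw [← commutatorElement_inv]; exact inv_mem hw
        · rw [commutatorElement_self]; exact one_mem H
    | one_left b hb => rw [commutatorElement_one_left]; exact one_mem H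
    | one_right a ha => rw [commutatorElement_one_right]; exact one_mem H
    | mul_left a b c ha hb hc' h1 h2 => rw [aux_mul_left hc]; exact mul_mem h1 h2
    | mul_right a b c ha hb hc' h1 h2 => rw [aux_mul_right hc]; exact mul_mem h1 h2
    | inv_left a b ha hb h1 => rw [aux_inv_left hc]; exact inv_mem h1
    | inv_right a b ha hb h1 => rw [aux_inv_right hc]; exact inv_mem h1
  · rw [hH, Subgroup.closure_le]
    rintro g hg
    simp only [Set.mem_insert_iff, Set.mem_singleton_iff] at hg
    rcases hg with rfl | rfl | rfl
    · exact aux_mem_comm x y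
    · exact aux_mem_comm x z
    · exact aux_mem_comm y z

end Aux

theorem stmt10 {G : Type*} [Group G] [Finite G] (p : ℕ) (hp : p.Prime)
    (hpG : IsPGroup p G) [Group.IsNilpotent G]
    (hclass : Group.nilpotencyClass G = 2)
    (x y z : G) (hgen : Subgroup.closure {x, y, z} = ⊤)
    (hcard : Nat.card (commutator G) = p ^ 2)
    (hexp : ∀ g ∈ commutator G, g ^ p = 1) :
    ∃ x' y' z' : G, Subgroup.closure {x', y', z'} = ⊤ ∧ ⁅y', z'⁆ = 1 ∧
      commutator G = Subgroup.closure {⁅x', y'⁆, ⁅x', z'⁆} := by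
  classical
  -- commutator subgroup is central
  have hbot : Subgroup.lowerCentralSeries (⊤ : Subgroup G) 2 = ⊥ := by
    rw [← hclass]; exact lowerCentralSeries_nilpotencyClass
  have hc : ∀ a ∈ commutator G, ∀ b : G, Commute a b := by
    intro a ha b
    rw [← commutatorElement_eq_one_iff_commute]
    have h1 : ⁅a, b⁆ ∈ Subgroup.lowerCentralSeries (⊤ : Subgroup G) 2 := by
      rw [show (2 : ℕ) = 1 + 1 from rfl, lowerCentralSeries_succ]
      exact Subgroup.commutator_mem_commutator
        (by rw [lowerCentralSeries_one]; exact ha) (Subgroup.mem_top b)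
    rw [hbot] at h1
    exact Subgroup.mem_bot.mp h1
  have hA := aux_commutator_eq_closure hc x y z hgen
  -- the commutator subgroup as a commutative group
  haveI : IsMulCommutative ↥(commutator G) :=
    ⟨⟨fun a b => Subtype.ext ((hc a.1 a.2 b.1).eq)⟩⟩
  let U : ↥(commutator G) := ⟨⁅x, y⁆, aux_mem_comm x y⟩
  let V : ↥(commutator G) := ⟨⁅x, z⁆, aux_mem_comm x z⟩
  let W : ↥(commutator G) := ⟨⁅y, z⁆, aux_mem_comm y z⟩
  have hexpC : ∀ g : ↥(commutator G), g ^ p = 1 := by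
    intro g
    refine Subtype.ext ?_
    rw [SubmonoidClass.coe_pow]
    exact hexp g.1 g.2
  have hkill : ∀ (g : ↥(commutator G)) (k : ℤ), g ^ ((p : ℤ) * k) = 1 := by
    intro g k
    rw [zpow_mul, zpow_natCast, hexpC, one_zpow]
  have hnorm : ∀ (g : ↥(commutator G)) (n : ℤ), ¬(p : ℤ) ∣ n →
      ∃ m : ℤ, (g ^ n) ^ m = g := by
    intro g n hn
    have hcop : IsCoprime (p : ℤ) n :=
      ((Nat.prime_iff_prime_int.mp hp).coprime_iff_not_dvd).mpr hn
    obtain ⟨a, b, hab⟩ := hcop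
    refine ⟨b, ?_⟩
    rw [← zpow_mul, show n * b = 1 + (p : ℤ) * (-a) by linarith, zpow_add,
      hkill, zpow_one, mul_one]
  -- pigeonhole: a nontrivial relation among U, V, W
  haveI : Fintype ↥(commutator G) := Fintype.ofFinite _
  have hlt : Fintype.card ↥(commutator G) < Fintype.card (Fin p × Fin p × Fin p) := by
    have h1 : Fintype.card ↥(commutator G) = p ^ 2 := by
      rw [← Nat.card_eq_fintype_card]; exact hcard
    have h2 : Fintype.card (Fin p × Fin p × Fin p) = p ^ 3 := by
      simp only [Fintype.card_prod, Fintype.card_fin]; ring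
    rw [h1, h2]
    exact Nat.pow_lt_pow_right hp.one_lt (by norm_num)
  obtain ⟨s, t, hne, heq⟩ := Fintype.exists_ne_map_eq_of_card_lt
    (fun q : Fin p × Fin p × Fin p =>
      U ^ ((q.1 : ℕ) : ℤ) * V ^ ((q.2.1 : ℕ) : ℤ) * W ^ ((q.2.2 : ℕ) : ℤ)) hlt

  set α : ℤ := ((s.1 : ℕ) : ℤ) - ((t.1 : ℕ) : ℤ) with hαdef
  set β : ℤ := ((s.2.1 : ℕ) : ℤ) - ((t.2.1 : ℕ) : ℤ) with hβdef
  set γ : ℤ := ((s.2.2 : ℕ) : ℤ) - ((t.2.2 : ℕ) : ℤ) with hγdef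
  have hrel : U ^ α * V ^ β * W ^ γ = 1 := by
    have h3 : U ^ α * V ^ β * W ^ γ =
        (U ^ ((s.1 : ℕ) : ℤ) * V ^ ((s.2.1 : ℕ) : ℤ) * W ^ ((s.2.2 : ℕ) : ℤ)) *
        (U ^ ((t.1 : ℕ) : ℤ) * V ^ ((t.2.1 : ℕ) : ℤ) * W ^ ((t.2.2 : ℕ) : ℤ))⁻¹ := by
      rw [hαdef, hβdef, hγdef, zpow_sub, zpow_sub, zpow_sub]
      simp only [mul_inv_rev]
      simp [mul_comm, mul_left_comm, mul_assoc]
    rw [h3, heq, mul_inv_cancel]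
  have hnotall : ¬((p : ℤ) ∣ α ∧ (p : ℤ) ∣ β ∧ (p : ℤ) ∣ γ) := by
    rintro ⟨h1, h2, h3⟩
    apply hne
    have e1 : α = 0 := Int.eq_zero_of_abs_lt_dvd h1
      (by have := s.1.isLt; have := t.1.isLt; rw [hαdef, abs_lt]; omega)
    have e2 : β = 0 := Int.eq_zero_of_abs_lt_dvd h2
      (by have := s.2.1.isLt; have := t.2.1.isLt; rw [hβdef, abs_lt]; omega)
    have e3 : γ = 0 := Int.eq_zero_of_abs_lt_dvd h3
      (by have := s.2.2.isLt; have := t.2.2.isLt; rw [hγdef, abs_lt]; omega)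
    rw [hαdef] at e1; rw [hβdef] at e2; rw [hγdef] at e3
    refine Prod.ext (Fin.val_injective ?_) (Prod.ext (Fin.val_injective ?_)
      (Fin.val_injective ?_)) <;> omega
  by_cases hγ : (p : ℤ) ∣ γ
  · -- W drops out of the relation
    have hWγ : W ^ γ = 1 := by obtain ⟨k, hk⟩ := hγ; rw [hk]; exact hkill W k
    have hrel2 : U ^ α * V ^ β = 1 := by rwa [hWγ, mul_one] at hrel
    by_cases hα : (p : ℤ) ∣ α
    · -- then V = 1, i.e. ⁅x,z⁆ = 1
      have hβ : ¬(p : ℤ) ∣ β := fun h => hnotall ⟨hα, h, hγ⟩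
      have hUα : U ^ α = 1 := by obtain ⟨k, hk⟩ := hα; rw [hk]; exact hkill U k
      have hVβ : V ^ β = 1 := by rwa [hUα, one_mul] at hrel2
      obtain ⟨m, hm⟩ := hnorm V β hβ
      have hV : V = 1 := by rw [← hm, hVβ, one_zpow]
      have hvG : ⁅x, z⁆ = 1 := congrArg Subtype.val hV
      refine ⟨y, x, z, ?_, hvG, ?_⟩
      · rw [show ({y, x, z} : Set G) = {x, y, z} by
          ext g; simp only [Set.mem_insert_iff, Set.mem_singleton_iff]; tauto]
        exact hgen
      · apply le_antisymm
        · rw [hA, Subgroup.closure_le]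
          rintro g hg
          simp only [Set.mem_insert_iff, Set.mem_singleton_iff] at hg
          rcases hg with rfl | rfl | rfl
          · rw [← commutatorElement_inv y x]
            exact inv_mem (Subgroup.subset_closure (Set.mem_insert _ _))
          · rw [hvG]; exact one_mem _
          · exact Subgroup.subset_closure (by simp)
        · rw [Subgroup.closure_le]
          rintro g hg
          simp only [Set.mem_insert_iff, Set.mem_singleton_iff] at hg
          rcases hg with rfl | rfl
          · exact aux_mem_comm y x
          · exact aux_mem_comm y z
    · -- normalize: U = V ^ B
      obtain ⟨m, hm⟩ := hnorm U α hα
      have hUVβ : U ^ α = (V ^ β)⁻¹ := eq_inv_of_mul_eq_one_left hrel2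
      have hU : U = V ^ (β * -m) := by
        rw [← hm, hUVβ, inv_zpow', ← zpow_mul]
      have huG : ⁅x, y⁆ = ⁅x, z⁆ ^ (β * -m) := by
        have h := congrArg Subtype.val hU
        rw [SubgroupClass.coe_zpow] at h
        exact h
      refine ⟨z, x, y * z ^ (-(β * -m)), ?_, ?_, ?_⟩
      · rw [eq_top_iff, ← hgen, Subgroup.closure_le]
        rintro g hg
        simp only [Set.mem_insert_iff, Set.mem_singleton_iff] at hg
        rcases hg with rfl | rfl | rfl
        · exact Subgroup.subset_closure (by simp)
        · have hy : g = (g * z ^ (-(β * -m))) * (z ^ (-(β * -m)))⁻¹ := by group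
          rw [hy]
          exact mul_mem (Subgroup.subset_closure (by simp))
            (inv_mem (zpow_mem (Subgroup.subset_closure (by simp)) _))
        · exact Subgroup.subset_closure (by simp)
      · rw [aux_mul_right hc, aux_zpow_right hc, huG, ← zpow_add,
          add_neg_cancel, zpow_zero]
      · apply le_antisymm
        · rw [hA, Subgroup.closure_le]
          have hvK : ⁅x, z⁆ ∈
              Subgroup.closure ({⁅z, x⁆, ⁅z, y * z ^ (-(β * -m))⁆} : Set G) := by
            rw [← commutatorElement_inv z x]
            exact inv_mem (Subgroup.subset_closure (Set.mem_insert _ _))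
          rintro g hg
          simp only [Set.mem_insert_iff, Set.mem_singleton_iff] at hg
          rcases hg with rfl | rfl | rfl
          · rw [huG]; exact zpow_mem hvK _
          · exact hvK
          · have hzc : ⁅z, y * z ^ (-(β * -m))⁆ = ⁅z, y⁆ := by
              rw [aux_mul_right hc, aux_zpow_right hc, commutatorElement_self,
                one_zpow, mul_one]
            rw [show ⁅y, z⁆ = ⁅z, y * z ^ (-(β * -m))⁆⁻¹ by
              rw [hzc, commutatorElement_inv]]
            exact inv_mem (Subgroup.subset_closure (by simp))
        · rw [Subgroup.closure_le]
          rintro g hg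
          simp only [Set.mem_insert_iff, Set.mem_singleton_iff] at hg
          rcases hg with rfl | rfl
          · exact aux_mem_comm z x
          · exact aux_mem_comm z _
  · -- normalize in W : W = U ^ A * V ^ B
    obtain ⟨m, hm⟩ := hnorm W γ hγ
    have hWγ : W ^ γ = (U ^ α * V ^ β)⁻¹ := eq_inv_of_mul_eq_one_right hrel
    have hW : W = U ^ (α * -m) * V ^ (β * -m) := by
      rw [← hm, hWγ, inv_zpow', mul_zpow, ← zpow_mul, ← zpow_mul]
    have hwG : ⁅y, z⁆ = ⁅x, y⁆ ^ (α * -m) * ⁅x, z⁆ ^ (β * -m) := by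
      have h := congrArg Subtype.val hW
      rw [Subgroup.coe_mul, SubgroupClass.coe_zpow, SubgroupClass.coe_zpow] at h
      exact h
    set A : ℤ := α * -m with hAdef
    set B : ℤ := β * -m with hBdef
    refine ⟨x, y * x ^ (-B), z * x ^ A, ?_, ?_, ?_⟩
    · rw [eq_top_iff, ← hgen, Subgroup.closure_le]
      rintro g hg
      simp only [Set.mem_insert_iff, Set.mem_singleton_iff] at hg
      rcases hg with rfl | rfl | rfl
      · exact Subgroup.subset_closure (by simp)
      · have hy : g = (g * x ^ (-B)) * (x ^ (-B))⁻¹ := by group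
        rw [hy]
        exact mul_mem (Subgroup.subset_closure (by simp))
          (inv_mem (zpow_mem (Subgroup.subset_closure (by simp)) _))
      · have hz : g = (g * x ^ A) * (x ^ A)⁻¹ := by group
        rw [hz]
        exact mul_mem (Subgroup.subset_closure (by simp))
          (inv_mem (zpow_mem (Subgroup.subset_closure (by simp)) _))
    · have hyx : ⁅y, x⁆ = ⁅x, y⁆⁻¹ := (commutatorElement_inv x y).symm
      rw [aux_mul_left hc, aux_mul_right hc, aux_zpow_right hc, aux_zpow_left hc,
        aux_mul_right hc, aux_zpow_right hc, commutatorElement_self, one_zpow,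
        mul_one, hyx, inv_zpow', hwG]
      have hcm : ⁅x, z⁆ ^ B * ⁅x, y⁆ ^ (-A) = ⁅x, y⁆ ^ (-A) * ⁅x, z⁆ ^ B :=
        ((hc _ (aux_mem_comm x z) _).zpow_zpow B (-A)).eq
      calc ⁅x, y⁆ ^ A * ⁅x, z⁆ ^ B * ⁅x, y⁆ ^ (-A) * ⁅x, z⁆ ^ (-B)
          = ⁅x, y⁆ ^ A * (⁅x, z⁆ ^ B * ⁅x, y⁆ ^ (-A)) * ⁅x, z⁆ ^ (-B) := by group
        _ = ⁅x, y⁆ ^ A * (⁅x, y⁆ ^ (-A) * ⁅x, z⁆ ^ B) * ⁅x, z⁆ ^ (-B) := by rw [hcm]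
        _ = 1 := by group
    · have c1 : ⁅x, y * x ^ (-B)⁆ = ⁅x, y⁆ := by
        rw [aux_mul_right hc, aux_zpow_right hc, commutatorElement_self,
          one_zpow, mul_one]
      have c2 : ⁅x, z * x ^ A⁆ = ⁅x, z⁆ := by
        rw [aux_mul_right hc, aux_zpow_right hc, commutatorElement_self,
          one_zpow, mul_one]
      rw [c1, c2]
      apply le_antisymm
      · rw [hA, Subgroup.closure_le]
        rintro g hg
        simp only [Set.mem_insert_iff, Set.mem_singleton_iff] at hg
        rcases hg with rfl | rfl | rfl
        · exact Subgroup.subset_closure (by simp)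
        · exact Subgroup.subset_closure (by simp)
        · rw [hwG]
          exact mul_mem (zpow_mem (Subgroup.subset_closure (by simp)) _)
            (zpow_mem (Subgroup.subset_closure (by simp)) _)
      · rw [Subgroup.closure_le]
        rintro g hg
        simp only [Set.mem_insert_iff, Set.mem_singleton_iff] at hg
        rcases hg with rfl | rfl
        · exact aux_mem_comm x y
        · exact aux_mem_comm x z
end

section
/- Let p be an odd prime and let G be a group of order p⁵ of nilpotency class 2 with G/G' ≅ C_p × C_p × C_p and G' ≅ C_p × C_p, given by generators x, y, z with [y,z] = 1 and G' = ⟨[x,y],[x,z]⟩. Then G does not admit a Kantor family of order (p², p). -/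
open scoped Pointwise
open scoped commutatorElement

/-- Cardinality of a set product of two subgroups intersecting trivially. -/
lemma aux_prod_card {G : Type*} [Group G] (H K : Subgroup G)
    (hdisj : ∀ w : G, w ∈ H → w ∈ K → w = 1) :
    Nat.card ((H : Set G) * (K : Set G)) = Nat.card H * Nat.card K := by
  have hbij : Function.Bijective
      (fun uv : H × K => (⟨(uv.1 : G) * uv.2,
        Set.mul_mem_mul uv.1.2 uv.2.2⟩ : ((H : Set G) * (K : Set G) : Set G))) := by
    constructor
    · rintro ⟨u₁, v₁⟩ ⟨u₂, v₂⟩ h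
      have h' : (u₁ : G) * v₁ = (u₂ : G) * v₂ := congrArg Subtype.val h
      have key : (u₂ : G)⁻¹ * u₁ = (v₂ : G) * (v₁ : G)⁻¹ :=
        mul_right_cancel (b := (v₁ : G)) (by rw [mul_assoc, h']; group)
      have h1 : ((u₂ : G)⁻¹ * u₁) ∈ H := H.mul_mem (H.inv_mem u₂.2) u₁.2
      have h2 : ((u₂ : G)⁻¹ * u₁) ∈ K := by
        rw [key]; exact K.mul_mem v₂.2 (K.inv_mem v₁.2)
      have := hdisj _ h1 h2
      have hu : (u₁ : G) = u₂ := by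
        have : (u₂ : G) * ((u₂ : G)⁻¹ * u₁) = u₂ * 1 := by rw [this]
        simpa [mul_assoc] using this
      have hv : (v₁ : G) = v₂ := by
        have h2' : (v₂ : G) * (v₁ : G)⁻¹ = 1 := by rw [← key, this]
        have : (v₂ : G) * (v₁ : G)⁻¹ * v₁ = 1 * v₁ := by rw [h2']
        simpa [mul_assoc] using this.symm
      exact Prod.ext (Subtype.ext hu) (Subtype.ext hv)
    · rintro ⟨w, hw⟩
      rcases Set.mem_mul.mp hw with ⟨u, hu, v, hv, huv⟩
      exact ⟨(⟨u, hu⟩, ⟨v, hv⟩), Subtype.ext huv⟩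
  rw [← Nat.card_prod]
  exact (Nat.card_congr (Equiv.ofBijective _ hbij)).symm

theorem stmt11 {G : Type*} [Group G] (p : ℕ) (hp : p.Prime) (hodd : Odd p)
    (hG : Nat.card G = p ^ 5) [Group.IsNilpotent G]
    (hclass : Group.nilpotencyClass G = 2)
    (hquot : ∀ g : G ⧸ commutator G, g ^ p = 1)
    (hcard : Nat.card (commutator G) = p ^ 2)
    (hexp : ∀ g ∈ commutator G, g ^ p = 1)
    (x y z : G) (hgen : Subgroup.closure {x, y, z} = ⊤) (hyz : ⁅y, z⁆ = 1)
    (hG' : commutator G = Subgroup.closure {⁅x, y⁆, ⁅x, z⁆}) :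
    ¬ ∃ A Astar : Fin (p + 1) → Subgroup G,
        IsKantorFamily (p ^ 2) p A Astar := by
  rintro ⟨A, Astar, h1, h2, h3, h4, h5⟩
  haveI : Fact p.Prime := ⟨hp⟩
  haveI : NeZero p := ⟨hp.ne_zero⟩
  have hp2 : 2 ≤ p := hp.two_le
  have hp3 : 3 ≤ p := by
    rcases hodd with ⟨k, hk⟩
    rcases Nat.lt_or_ge p 3 with h | h
    · interval_cases p <;> omega
    · exact h
  have hppos : 0 < p := hp.pos
  haveI hfin : Finite G := Nat.finite_of_card_ne_zero (by rw [hG]; positivity)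
  set K := commutator G with hKdef
  -- commutator subgroup is central
  have hLCS : (⊤ : Subgroup G).lowerCentralSeries 2 = ⊥ :=
    lowerCentralSeries_eq_bot_iff_nilpotencyClass_le.mpr (le_of_eq hclass)
  have hcomm_mem : ∀ g h : G, ⁅g, h⁆ ∈ K := fun g h =>
    Subgroup.commutator_mem_commutator (Subgroup.mem_top g) (Subgroup.mem_top h)
  have hcenK : ∀ k : G, k ∈ K → ∀ g : G, Commute k g := by
    intro k hk g
    have hmem : ⁅k, g⁆ ∈ (⊤ : Subgroup G).lowerCentralSeries 2 := by
      rw [Subgroup.lowerCentralSeries_succ]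
      exact Subgroup.commutator_mem_commutator (by rwa [Subgroup.top_lowerCentralSeries_one]) (Subgroup.mem_top g)
    rw [hLCS] at hmem
    exact commutatorElement_eq_one_iff_commute.mp (Subgroup.mem_bot.mp hmem)
  have hcen : ∀ g h w : G, Commute ⁅g, h⁆ w := fun g h w => hcenK _ (hcomm_mem g h) w
  -- bilinearity of the commutator
  have c1 : ∀ g h k : G, ⁅g, h * k⁆ = ⁅g, h⁆ * ⁅g, k⁆ := by
    intro g h k
    have e : ⁅g, h * k⁆ = ⁅g, h⁆ * (h * ⁅g, k⁆ * h⁻¹) := by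
      simp only [commutatorElement_def]; group
    rw [e, ← (hcen g k h).eq, mul_assoc, mul_inv_cancel, mul_one]
  have c2 : ∀ g h k : G, ⁅g * h, k⁆ = ⁅g, k⁆ * ⁅h, k⁆ := by
    intro g h k
    have e : ⁅g * h, k⁆ = (g * ⁅h, k⁆ * g⁻¹) * ⁅g, k⁆ := by
      simp only [commutatorElement_def]; group
    rw [e, ← (hcen h k g).eq, mul_assoc, mul_assoc, mul_inv_cancel_left]
    exact (hcen h k ⁅g, k⁆).eq
  -- commutator with fixed left argument, as a hom
  have czpow_right : ∀ (g h : G) (n : ℤ), ⁅g, h ^ n⁆ = ⁅g, h⁆ ^ n := by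
    intro g h n
    let φ : G →* G :=
      { toFun := fun w => ⁅g, w⁆
        map_one' := by simp [commutatorElement_def]
        map_mul' := fun a b => c1 g a b }
    exact φ.map_zpow h n
  have cmul_right : ∀ (g h k : G), ⁅g, h * k⁆ = ⁅g, h⁆ * ⁅g, k⁆ := c1
  have czpow_left : ∀ (g h : G) (n : ℤ), ⁅g ^ n, h⁆ = ⁅g, h⁆ ^ n := by
    intro g h n
    let φ : G →* G :=
      { toFun := fun w => ⁅w, h⁆
        map_one' := by simp [commutatorElement_def]
        map_mul' := fun a b => c2 a b h }
    exact φ.map_zpow g n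
  -- the abelian subgroup C
  set C : Subgroup G := Subgroup.closure {y, z} ⊔ K with hCdef
  have hyC : y ∈ C := Subgroup.mem_sup_left (Subgroup.subset_closure (by simp))
  have hzC : z ∈ C := Subgroup.mem_sup_left (Subgroup.subset_closure (by simp))
  have hKC : K ≤ C := le_sup_right
  haveI hCnormal : C.Normal := by
    constructor
    intro h hh g
    have e : g * h * g⁻¹ = ⁅g, h⁆ * h := by simp only [commutatorElement_def]; group
    rw [e]
    exact C.mul_mem (hKC (hcomm_mem g h)) hh
  have hCab : ∀ u : G, u ∈ C → ∀ v : G, v ∈ C → Commute u v := by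
    have hCc : C = Subgroup.closure ({y, z} ∪ (K : Set G)) := by
      rw [Subgroup.closure_union, Subgroup.closure_eq]
    intro u hu v hv
    rw [hCc] at hu hv
    refine Subgroup.closure_induction₂
      (p := fun a b _ _ => Commute a b) ?_ ?_ ?_ ?_ ?_ ?_ ?_ hu hv
    · rintro a b (ha | haK) (hb | hbK)
      · rcases ha with rfl | rfl <;> rcases hb with rfl | rfl
        · exact Commute.refl _
        · exact commutatorElement_eq_one_iff_commute.mp hyz
        · exact (commutatorElement_eq_one_iff_commute.mp hyz).symm
        · exact Commute.refl _
      · exact (hcenK b hbK a).symm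
      · exact hcenK a haK b
      · exact hcenK a haK b
    · exact fun a _ => Commute.one_left a
    · exact fun a _ => Commute.one_right a
    · exact fun a b c _ _ _ h₁ h₂ => h₁.mul_left h₂
    · exact fun a b c _ _ _ h₁ h₂ => h₁.mul_right h₂
    · exact fun a b _ _ h => h.inv_left
    · exact fun a b _ _ h => h.inv_right
  -- the abelianization
  let Q := Abelianization G
  let π : G →* Q := Abelianization.of
  have hquot' : ∀ q : Q, q ^ p = 1 := hquot
  have hπker : ∀ g : G, π g = 1 ↔ g ∈ K := fun g => QuotientGroup.eq_one_iff g
  have hπsurj : Function.Surjective π := fun q =>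
    QuotientGroup.induction_on q fun g => ⟨g, rfl⟩
  have hzQ : ∀ (q : Q) (m n : ℤ), (p : ℤ) ∣ (m - n) → q ^ m = q ^ n := by
    rintro q m n ⟨t, ht⟩
    have hq : q ^ (p : ℤ) = 1 := by rw [zpow_natCast]; exact hquot' q
    have hm : m = n + p * t := by linarith
    rw [hm, zpow_add, zpow_mul, hq, one_zpow, mul_one]
  have horderQ : ∀ q : Q, orderOf q ∣ p := fun q => orderOf_dvd_of_pow_eq_one (hquot' q)
  have hmodcast : ∀ m : ℤ, (p : ℤ) ∣ ((((m : ZMod p).val : ℤ)) - m) := by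
    intro m
    have : ((((m : ZMod p).val : ℤ) - m : ℤ) : ZMod p) = 0 := by
      push_cast
      simp [ZMod.natCast_val, ZMod.cast_id]
    exact (ZMod.intCast_zmod_eq_zero_iff_dvd _ p).mp this
  -- upper bound for closure of a pair in Q
  have hpair : ∀ a b : Q, Nat.card (Subgroup.closure {a, b} : Subgroup Q) ≤ p ^ 2 := by
    intro a b
    have haM : a ∈ Subgroup.closure ({a, b} : Set Q) := Subgroup.subset_closure (by simp)
    have hbM : b ∈ Subgroup.closure ({a, b} : Set Q) := Subgroup.subset_closure (by simp)
    have hsurj : Function.Surjective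
        (fun ij : ZMod p × ZMod p =>
          (⟨a ^ ((ij.1.val : ℤ)) * b ^ ((ij.2.val : ℤ)),
            Subgroup.mul_mem _ (Subgroup.zpow_mem _ haM _) (Subgroup.zpow_mem _ hbM _)⟩ :
            (Subgroup.closure {a, b} : Subgroup Q))) := by
      rintro ⟨w, hw⟩
      rcases Subgroup.mem_closure_pair.mp hw with ⟨m, n, hmn⟩
      refine ⟨((m : ZMod p), (n : ZMod p)), Subtype.ext ?_⟩
      show a ^ (((m : ZMod p).val : ℤ)) * b ^ (((n : ZMod p).val : ℤ)) = w
      rw [hzQ a _ m (hmodcast m), hzQ b _ n (hmodcast n), hmn]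
    have := Nat.card_le_card_of_surjective _ hsurj
    calc Nat.card (Subgroup.closure {a, b} : Subgroup Q)
        ≤ Nat.card (ZMod p × ZMod p) := this
      _ = p ^ 2 := by rw [Nat.card_prod, Nat.card_zmod]; ring
  have hcyc : ∀ q : Q, Nat.card (Subgroup.zpowers q) ≤ p := by
    intro q
    rw [Nat.card_zpowers]
    exact Nat.le_of_dvd hppos (horderQ q)
  -- cardinality of Q
  have hcardQ : Nat.card Q = p ^ 3 := by
    have hq := Subgroup.card_eq_card_quotient_mul_card_subgroup K
    rw [hG, hcard] at hq
    have hQK : Nat.card Q = Nat.card (G ⧸ K) := rfl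
    have h53 : p ^ 5 = p ^ 3 * p ^ 2 := by ring
    rw [hQK]
    have hp2pos : 0 < p ^ 2 := by positivity
    exact Nat.eq_of_mul_eq_mul_right hp2pos (by omega)
  -- closure{x} ⊔ C = ⊤
  have htopG : Subgroup.zpowers x ⊔ C = ⊤ := by
    rw [eq_top_iff, ← hgen, Subgroup.closure_le]
    rintro w (rfl | rfl | rfl)
    · exact Subgroup.mem_sup_left (Subgroup.mem_zpowers w)
    · exact Subgroup.mem_sup_right hyC
    · exact Subgroup.mem_sup_right hzC
  -- the image of C in Q
  set CQ : Subgroup Q := Subgroup.map π C with hCQdef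
  have hCQclos : CQ = Subgroup.closure {π y, π z} := by
    have hmapK : Subgroup.map π K = ⊥ := by
      rw [eq_bot_iff]
      rintro w ⟨k, hk, rfl⟩
      exact Subgroup.mem_bot.mpr ((hπker k).mpr hk)
    rw [hCQdef, hCdef, Subgroup.map_sup, hmapK, sup_bot_eq, MonoidHom.map_closure,
      Set.image_pair]
  have hcardCQ : Nat.card CQ = p ^ 2 := by
    refine le_antisymm (by rw [hCQclos]; exact hpair (π y) (π z)) ?_
    -- lower bound
    have htopQ : Subgroup.zpowers (π x) ⊔ CQ = ⊤ := by
      have := congrArg (Subgroup.map π) htopG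
      rw [Subgroup.map_sup, Subgroup.map_top_of_surjective π hπsurj] at this
      rw [← this, hCQdef]
      congr 1
      rw [Subgroup.zpowers_eq_closure, Subgroup.zpowers_eq_closure, MonoidHom.map_closure,
        Set.image_singleton]
    have e2 : ((⊤ : Subgroup Q) : Set Q) = (Subgroup.zpowers (π x) : Set Q) * (CQ : Set Q) := by
      rw [← htopQ, Subgroup.mul_normal]
    have e3 : Nat.card ((⊤ : Subgroup Q) : Set Q) ≤
        Nat.card (Subgroup.zpowers (π x) : Set Q) * Nat.card (CQ : Set Q) := by
      rw [e2]; exact Set.natCard_mul_le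
    have e4 : Nat.card ((⊤ : Subgroup Q) : Set Q) = p ^ 3 := by
      rw [SetLike.coe_sort_coe, Subgroup.card_top, hcardQ]
    have e5 : Nat.card (Subgroup.zpowers (π x) : Set Q) ≤ p := hcyc (π x)
    have e6 : Nat.card (CQ : Set Q) = Nat.card CQ := rfl
    have e7 : p ^ 3 ≤ p * Nat.card CQ := by
      rw [e4, e6] at e3
      calc p ^ 3 ≤ Nat.card (Subgroup.zpowers (π x) : Set Q) * Nat.card CQ := e3
        _ ≤ p * Nat.card CQ := Nat.mul_le_mul_right _ e5
    have e8 : p * p ^ 2 ≤ p * Nat.card CQ := by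
      calc p * p ^ 2 = p ^ 3 := by ring
        _ ≤ p * Nat.card CQ := e7
    exact Nat.le_of_mul_le_mul_left e8 hppos
  -- cardinality of C
  have hcardC : Nat.card C = p ^ 4 := by
    let ψ₂ : C →* Q := π.comp C.subtype
    have hrange : ψ₂.range = CQ := by
      ext w
      constructor
      · rintro ⟨c, rfl⟩
        exact ⟨(c : G), c.2, rfl⟩
      · rintro ⟨g, hg, rfl⟩
        exact ⟨⟨g, hg⟩, rfl⟩
    have hker2 : ψ₂.ker = K.subgroupOf C := by
      ext c
      simp only [MonoidHom.mem_ker, Subgroup.mem_subgroupOf]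
      exact hπker (c : G)
    have hq := Subgroup.card_eq_card_quotient_mul_card_subgroup ψ₂.ker
    have hq1 : Nat.card (C ⧸ ψ₂.ker) = p ^ 2 := by
      rw [Nat.card_congr (QuotientGroup.quotientKerEquivRange ψ₂).toEquiv, hrange, hcardCQ]
    have hq2 : Nat.card ψ₂.ker = p ^ 2 := by
      rw [hker2, Nat.card_congr (Subgroup.subgroupOfEquivOfLe hKC).toEquiv, hcard]
    rw [hq1, hq2] at hq
    rw [hq]; ring
  -- the kernel of the commutator-with-x map on C is exactly K
  have hxkernel : ∀ c : G, c ∈ C → ⁅x, c⁆ = 1 → c ∈ K := by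
    let ψ : C →* G :=
      { toFun := fun c => ⁅x, (c : G)⁆
        map_one' := by simp [commutatorElement_def]
        map_mul' := fun a b => c1 x a b }
    have hrange : ψ.range = K := by
      refine le_antisymm ?_ ?_
      · rintro w ⟨c, rfl⟩
        exact hcomm_mem x (c : G)
      · rw [hG', Subgroup.closure_le]
        rintro w (rfl | rfl)
        · exact ⟨⟨y, hyC⟩, rfl⟩
        · exact ⟨⟨z, hzC⟩, rfl⟩
    have hkerK : K.subgroupOf C ≤ ψ.ker := by
      rintro ⟨c, hc⟩ hck
      have : c ∈ K := Subgroup.mem_subgroupOf.mp hck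
      exact commutatorElement_eq_one_iff_commute.mpr (hcenK c this x).symm
    have hq := Subgroup.card_eq_card_quotient_mul_card_subgroup ψ.ker
    have hq1 : Nat.card (C ⧸ ψ.ker) = p ^ 2 := by
      rw [Nat.card_congr (QuotientGroup.quotientKerEquivRange ψ).toEquiv, hrange, hcard]
    have hq2 : Nat.card (K.subgroupOf C) = p ^ 2 := by
      rw [Nat.card_congr (Subgroup.subgroupOfEquivOfLe hKC).toEquiv, hcard]
    rw [hcardC, hq1] at hq
    have hkcard : Nat.card ψ.ker = p ^ 2 := by
      have h44 : p ^ 2 * Nat.card ψ.ker = p ^ 2 * p ^ 2 := by rw [← hq]; ring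
      exact Nat.eq_of_mul_eq_mul_left (by positivity) h44
    -- so the two subgroups are equal
    have hseteq : ((K.subgroupOf C : Subgroup C) : Set C) = (ψ.ker : Set C) := by
      apply Set.eq_of_subset_of_ncard_le (SetLike.coe_subset_coe.mpr hkerK)
      rw [← Nat.card_coe_set_eq, ← Nat.card_coe_set_eq,
        SetLike.coe_sort_coe, SetLike.coe_sort_coe, hkcard, hq2]
    intro c hc hxc
    have hmem : (⟨c, hc⟩ : C) ∈ ψ.ker := MonoidHom.mem_ker.mpr hxc
    have : (⟨c, hc⟩ : C) ∈ K.subgroupOf C := by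
      rw [← SetLike.mem_coe, hseteq] at *
      exact hmem
    exact Subgroup.mem_subgroupOf.mp this
  -- decomposition of elements
  have hdecomp : ∀ g : G, ∃ (a : ℤ) (c : G), c ∈ C ∧ g = x ^ a * c := by
    intro g
    have hg : g ∈ ((⊤ : Subgroup G) : Set G) := trivial
    rw [← htopG, Subgroup.mul_normal (Subgroup.zpowers x) C] at hg
    rcases Set.mem_mul.mp hg with ⟨u, hu, v, hv, huv⟩
    rcases Subgroup.mem_zpowers_iff.mp hu with ⟨a, rfl⟩
    exact ⟨a, v, hv, huv.symm⟩
  have hxpK : x ^ (p : ℕ) ∈ K := by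
    apply (hπker _).mp
    rw [map_pow]
    exact hquot' (π x)
  -- the key lemma: a subgroup of order p^2 meeting K trivially lies inside C
  have hgood : ∀ B : Subgroup G, Nat.card B = p ^ 2 → B ⊓ K = ⊥ → (B : Set G) ⊆ (C : Set G) := by
    intro B hB hBK
    by_contra hnc
    rcases Set.not_subset.mp hnc with ⟨g, hgB, hgC⟩
    have hBcomm : ∀ a b : B, a * b = b * a :=
      IsPGroup.commutative_of_card_eq_prime_sq hB
    obtain ⟨a, c, hcC, hgx⟩ := hdecomp g
    have hpa : ¬ (p : ℤ) ∣ a := by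
      rintro ⟨t, rfl⟩
      apply hgC
      rw [hgx]
      refine C.mul_mem ?_ hcC
      have : x ^ ((p : ℤ) * t) = (x ^ (p : ℕ)) ^ t := by
        rw [← zpow_natCast x p, ← zpow_mul]
      rw [this]
      exact C.zpow_mem (hKC hxpK) t
    obtain ⟨ainv, t0, hbez⟩ : ∃ ainv t0 : ℤ, ainv * a = 1 + p * t0 := by
      have hu : (a : ZMod p) ≠ 0 := fun h0 => hpa ((ZMod.intCast_zmod_eq_zero_iff_dvd a p).mp h0)
      have hcast : ((((a : ZMod p)⁻¹.val : ℤ) * a - 1 : ℤ) : ZMod p) = 0 := by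
        push_cast
        rw [ZMod.natCast_val, ZMod.cast_id, inv_mul_cancel₀ hu]
        simp
      obtain ⟨t0, ht0⟩ := (ZMod.intCast_zmod_eq_zero_iff_dvd _ p).mp hcast
      exact ⟨((a : ZMod p)⁻¹.val : ℤ), t0, by linarith⟩
    -- every element of B maps into the cyclic subgroup generated by π g
    have hkey : ∀ h : G, h ∈ B → π h ∈ Subgroup.zpowers (π g) := by
      intro h hh
      obtain ⟨a', c', hc'C, hhx⟩ := hdecomp h
      have hcomm : ⁅g, h⁆ = 1 := by
        apply commutatorElement_eq_one_iff_commute.mpr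
        have := hBcomm ⟨g, hgB⟩ ⟨h, hh⟩
        exact congrArg Subtype.val this
      have hexpand : ⁅g, h⁆ = ⁅x, c' ^ a * c ^ (-a')⁆ := by
        rw [hgx, hhx]
        rw [c2, c1, c1]
        have e1 : ⁅x ^ a, x ^ a'⁆ = 1 := by
          rw [czpow_left, czpow_right]
          simp [commutatorElement_def]
        have e2 : ⁅x ^ a, c'⁆ = ⁅x, c'⁆ ^ a := czpow_left x c' a
        have e3 : ⁅c, x ^ a'⁆ = ⁅x, c⁆ ^ (-a') := by
          rw [czpow_right, zpow_neg, ← inv_zpow, commutatorElement_inv]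
        have e4 : ⁅c, c'⁆ = 1 := commutatorElement_eq_one_iff_commute.mpr (hCab c hcC c' hc'C)
        rw [e1, e2, e3, e4, one_mul, mul_one]
        rw [c1 x (c' ^ a) (c ^ (-a')), czpow_right, czpow_right]
      have hcc : c' ^ a * c ^ (-a') ∈ K := by
        apply hxkernel _ (C.mul_mem (C.zpow_mem hc'C a) (C.zpow_mem hcC (-a')))
        rw [← hexpand, hcomm]
      have hQrel : (π c') ^ a = (π c) ^ a' := by
        have h1' := (hπker _).mpr hcc
        rw [map_mul, map_zpow, map_zpow] at h1'
        have : (π c') ^ a * ((π c) ^ a')⁻¹ = 1 := by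
          rw [← zpow_neg]; exact h1'
        exact mul_inv_eq_one.mp this
      refine ⟨ainv * a', ?_⟩
      show (π g) ^ (ainv * a') = π h
      rw [hgx, hhx]
      simp only [map_mul, map_zpow]
      rw [mul_zpow]
      congr 1
      · rw [← zpow_mul]
        apply hzQ
        refine ⟨t0 * a', ?_⟩
        have : a * (ainv * a') = (ainv * a) * a' := by ring
        rw [this, hbez]; ring
      · have e5 : (π c) ^ (ainv * a') = ((π c) ^ a') ^ ainv := by
          rw [← zpow_mul]; ring_nf
        rw [e5, ← hQrel, ← zpow_mul]
        have e6 : (π c') ^ (a * ainv) = (π c') ^ (1 : ℤ) := by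
          apply hzQ
          refine ⟨t0, ?_⟩
          have : a * ainv = ainv * a := by ring
          rw [this, hbez]; ring
        rw [e6, zpow_one]
    -- cardinality contradiction
    have hinj : Function.Injective
        (fun b : B => (⟨π (b : G), hkey _ b.2⟩ : Subgroup.zpowers (π g))) := by
      intro b₁ b₂ hb
      have hb' : π (b₁ : G) = π (b₂ : G) := congrArg Subtype.val hb
      have hmem : (b₁ : G)⁻¹ * (b₂ : G) ∈ K := by
        apply (hπker _).mp
        rw [map_mul, map_inv, hb']
        simp
      have hmemB : (b₁ : G)⁻¹ * (b₂ : G) ∈ B := B.mul_mem (B.inv_mem b₁.2) b₂.2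
      have : (b₁ : G)⁻¹ * (b₂ : G) ∈ B ⊓ K := ⟨hmemB, hmem⟩
      rw [hBK, Subgroup.mem_bot] at this
      apply Subtype.ext
      have : (b₁ : G) * ((b₁ : G)⁻¹ * (b₂ : G)) = b₁ * 1 := by rw [this]
      simpa [mul_assoc] using this.symm
    have hle := Nat.card_le_card_of_injective _ hinj
    rw [hB] at hle
    have := le_trans hle (hcyc (π g))
    nlinarith
  -- helper: nontrivial element of a nontrivial subgroup
  have hne : ∀ H : Subgroup G, H ≠ ⊥ → ∃ w : G, w ∈ H ∧ w ≠ 1 := by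
    intro H h
    by_contra hc
    push_neg at hc
    exact h ((Subgroup.eq_bot_iff_forall H).mpr hc)
  -- three pairwise distinct "bad" indices give a contradiction
  have htriplebad : ∀ i j k : Fin (p + 1), i ≠ j → j ≠ k → i ≠ k →
      A i ⊓ K ≠ ⊥ → A j ⊓ K ≠ ⊥ → A k ⊓ K ≠ ⊥ → False := by
    intro i j k hij hjk hik hbi hbj hbk
    obtain ⟨ci, hci, hci1⟩ := hne _ hbi
    obtain ⟨cj, hcj, hcj1⟩ := hne _ hbj
    obtain ⟨ck, hck, hck1⟩ := hne _ hbk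
    have hciA : ci ∈ A i := hci.1
    have hciK : ci ∈ K := hci.2
    have hcjA : cj ∈ A j := hcj.1
    have hcjK : cj ∈ K := hcj.2
    have hdisj : ∀ w : G, w ∈ Subgroup.zpowers ci → w ∈ Subgroup.zpowers cj → w = 1 := by
      intro w hwi hwj
      have h1' : w ∈ A i := Subgroup.zpowers_le.mpr hciA hwi
      have h2' : w ∈ Astar j := h3 j (Subgroup.zpowers_le.mpr hcjA hwj)
      have : w ∈ A i ⊓ Astar j := ⟨h1', h2'⟩
      rw [h4 i j hij] at this
      exact Subgroup.mem_bot.mp this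
    have horderi : orderOf ci = p := by
      have hdvd : orderOf ci ∣ p := orderOf_dvd_of_pow_eq_one (hexp ci hciK)
      rcases (Nat.Prime.eq_one_or_self_of_dvd hp _ hdvd) with h | h
      · exact absurd (orderOf_eq_one_iff.mp h) hci1
      · exact h
    have horderj : orderOf cj = p := by
      have hdvd : orderOf cj ∣ p := orderOf_dvd_of_pow_eq_one (hexp cj hcjK)
      rcases (Nat.Prime.eq_one_or_self_of_dvd hp _ hdvd) with h | h
      · exact absurd (orderOf_eq_one_iff.mp h) hcj1
      · exact h
    set P : Set G := (Subgroup.zpowers ci : Set G) * (Subgroup.zpowers cj : Set G) with hPdef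
    have hPsub : P ⊆ (K : Set G) := by
      rintro w hw
      rcases Set.mem_mul.mp hw with ⟨u, hu, v, hv, huv⟩
      have hu' : u ∈ K := Subgroup.zpowers_le.mpr hciK hu
      have hv' : v ∈ K := Subgroup.zpowers_le.mpr hcjK hv
      rw [← huv]
      exact K.mul_mem hu' hv'
    have hPcard : Nat.card P = p ^ 2 := by
      rw [hPdef, aux_prod_card _ _ hdisj, Nat.card_zpowers, Nat.card_zpowers,
        horderi, horderj]
      ring
    have hPK : P = (K : Set G) := by
      apply Set.eq_of_subset_of_ncard_le hPsub
      rw [← Nat.card_coe_set_eq, ← Nat.card_coe_set_eq, hPcard,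
        SetLike.coe_sort_coe, hcard]
    have hckP : ck ∈ P := by rw [hPK]; exact hck.2
    have hckAA : ck ∈ (A i : Set G) * (A j : Set G) := by
      apply Set.mul_subset_mul ?_ ?_ hckP
      · exact fun w hw => Subgroup.zpowers_le.mpr hciA hw
      · exact fun w hw => Subgroup.zpowers_le.mpr hcjA hw
    exact hck1 (h5 i j k hij hjk hik ck hckAA hck.1)
  -- two "good" indices plus any third give a contradiction
  have hgoodpair : ∀ i j k : Fin (p + 1), i ≠ j → j ≠ k → i ≠ k →
      A i ⊓ K = ⊥ → A j ⊓ K = ⊥ → False := by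
    intro i j k hij hjk hik hgi hgj
    have hAiC : (A i : Set G) ⊆ (C : Set G) := hgood _ (h1 i) hgi
    have hAjC : (A j : Set G) ⊆ (C : Set G) := hgood _ (h1 j) hgj
    have hdisj : ∀ w : G, w ∈ A i → w ∈ A j → w = 1 := by
      intro w hwi hwj
      have : w ∈ A i ⊓ Astar j := ⟨hwi, h3 j hwj⟩
      rw [h4 i j hij] at this
      exact Subgroup.mem_bot.mp this
    set P : Set G := (A i : Set G) * (A j : Set G) with hPdef
    have hPsub : P ⊆ (C : Set G) := by
      rintro w hw
      rcases Set.mem_mul.mp hw with ⟨u, hu, v, hv, huv⟩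
      rw [← huv]
      exact C.mul_mem (hAiC hu) (hAjC hv)
    have hPcard : Nat.card P = p ^ 4 := by
      rw [hPdef, aux_prod_card _ _ hdisj, h1 i, h1 j]
      ring
    have hPC : P = (C : Set G) := by
      apply Set.eq_of_subset_of_ncard_le hPsub
      rw [← Nat.card_coe_set_eq, ← Nat.card_coe_set_eq, hPcard,
        SetLike.coe_sort_coe, hcardC]
    -- A k must meet C nontrivially
    have hmeet : A k ⊓ C ≠ ⊥ := by
      intro hbot
      have hinj : Function.Injective (fun a : A k => ((a : G) : G ⧸ C)) := by
        intro a₁ a₂ ha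
        have : (a₁ : G)⁻¹ * (a₂ : G) ∈ C := (QuotientGroup.eq).mp ha
        have hmemA : (a₁ : G)⁻¹ * (a₂ : G) ∈ A k := (A k).mul_mem ((A k).inv_mem a₁.2) a₂.2
        have : (a₁ : G)⁻¹ * (a₂ : G) ∈ A k ⊓ C := ⟨hmemA, this⟩
        rw [hbot, Subgroup.mem_bot] at this
        apply Subtype.ext
        have : (a₁ : G) * ((a₁ : G)⁻¹ * (a₂ : G)) = a₁ * 1 := by rw [this]
        simpa [mul_assoc] using this.symm
      have hle := Nat.card_le_card_of_injective _ hinj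
      rw [h1 k] at hle
      have hqc := Subgroup.card_eq_card_quotient_mul_card_subgroup C
      rw [hG, hcardC] at hqc
      have hquotcard : Nat.card (G ⧸ C) = p := by
        have h54 : Nat.card (G ⧸ C) * p ^ 4 = p * p ^ 4 := by rw [← hqc]; ring
        exact Nat.eq_of_mul_eq_mul_right (by positivity) h54
      rw [hquotcard] at hle
      nlinarith
    obtain ⟨w, hw, hw1⟩ := hne _ hmeet
    have hwP : w ∈ P := by rw [hPC]; exact hw.2
    exact hw1 (h5 i j k hij hjk hik w hwP hw.1)
  -- final case analysis with four distinct indices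
  have hplt : ∀ m : ℕ, m < 4 → m < p + 1 := fun m hm => lt_of_lt_of_le hm (Nat.succ_le_succ hp3)
  let i0 : Fin (p + 1) := ⟨0, hplt 0 (by norm_num)⟩
  let i1 : Fin (p + 1) := ⟨1, hplt 1 (by norm_num)⟩
  let i2 : Fin (p + 1) := ⟨2, hplt 2 (by norm_num)⟩
  let i3 : Fin (p + 1) := ⟨3, hplt 3 (by norm_num)⟩
  have d01 : i0 ≠ i1 := fun h => by simpa [i0, i1, Fin.ext_iff] using h
  have d02 : i0 ≠ i2 := fun h => by simpa [i0, i2, Fin.ext_iff] using h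
  have d03 : i0 ≠ i3 := fun h => by simpa [i0, i3, Fin.ext_iff] using h
  have d12 : i1 ≠ i2 := fun h => by simpa [i1, i2, Fin.ext_iff] using h
  have d13 : i1 ≠ i3 := fun h => by simpa [i1, i3, Fin.ext_iff] using h
  have d23 : i2 ≠ i3 := fun h => by simpa [i2, i3, Fin.ext_iff] using h
  by_cases g0 : A i0 ⊓ K = ⊥
  · by_cases g1 : A i1 ⊓ K = ⊥
    · exact hgoodpair i0 i1 i2 d01 d12 d02 g0 g1
    · by_cases g2 : A i2 ⊓ K = ⊥
      · exact hgoodpair i0 i2 i1 d02 d12.symm d01 g0 g2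
      · by_cases g3 : A i3 ⊓ K = ⊥
        · exact hgoodpair i0 i3 i1 d03 d13.symm d01 g0 g3
        · exact htriplebad i1 i2 i3 d12 d23 d13 g1 g2 g3
  · by_cases g1 : A i1 ⊓ K = ⊥
    · by_cases g2 : A i2 ⊓ K = ⊥
      · exact hgoodpair i1 i2 i0 d12 d02.symm d01.symm g1 g2
      · by_cases g3 : A i3 ⊓ K = ⊥
        · exact hgoodpair i1 i3 i0 d13 d03.symm d01.symm g1 g3
        · exact htriplebad i0 i2 i3 d02 d23 d03 g0 g2 g3
    · by_cases g2 : A i2 ⊓ K = ⊥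
      · by_cases g3 : A i3 ⊓ K = ⊥
        · exact hgoodpair i2 i3 i0 d23 d03.symm d02.symm g2 g3
        · exact htriplebad i0 i1 i3 d01 d13 d03 g0 g1 g3
      · exact htriplebad i0 i1 i2 d01 d12 d02 g0 g1 g2
end

section
/- Let p be a prime and G a group of order p⁵ of nilpotency class 2 with G' ≅ C_p × C_p, presented by generators x, y, z with [y,z] = 1 and G' = ⟨[x,y],[x,z]⟩ central. If H is a subgroup of G of order p² with H ∩ Z(G) = 1, then there exist elements c, d ∈ Z(G) such that H = ⟨yc, zd⟩. In particular, any two such subgroups commute elementwise. -/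
open scoped commutatorElement

section Stmt12Aux
variable {G : Type*} [Group G]

lemma stmt12_comm_mul_left (a b c : G) : ⁅a * b, c⁆ = a * ⁅b, c⁆ * a⁻¹ * ⁅a, c⁆ := by
  simp only [commutatorElement_def]; group

lemma stmt12_comm_mul_right (a b c : G) : ⁅a, b * c⁆ = ⁅a, b⁆ * (b * ⁅a, c⁆ * b⁻¹) := by
  simp only [commutatorElement_def]; group

/-- Left commutator map as hom, assuming commutators central. -/
def stmt12_commHomL (hc : ∀ g h : G, ⁅g, h⁆ ∈ Subgroup.center G) (k : G) : G →* G where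
  toFun g := ⁅g, k⁆
  map_one' := by simp only [commutatorElement_def]; group
  map_mul' a b := by
    show ⁅a * b, k⁆ = ⁅a, k⁆ * ⁅b, k⁆
    rw [stmt12_comm_mul_left]
    have h1 : a * ⁅b, k⁆ = ⁅b, k⁆ * a := Subgroup.mem_center_iff.mp (hc b k) a
    have h2 : ⁅b, k⁆ * ⁅a, k⁆ = ⁅a, k⁆ * ⁅b, k⁆ := Subgroup.mem_center_iff.mp (hc a k) _
    rw [h1, mul_assoc, mul_assoc, mul_inv_cancel_left, h2]

/-- Right commutator map as hom, assuming commutators central. -/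
def stmt12_commHomR (hc : ∀ g h : G, ⁅g, h⁆ ∈ Subgroup.center G) (k : G) : G →* G where
  toFun g := ⁅k, g⁆
  map_one' := by simp only [commutatorElement_def]; group
  map_mul' a b := by
    show ⁅k, a * b⁆ = ⁅k, a⁆ * ⁅k, b⁆
    rw [stmt12_comm_mul_right]
    have h1 : a * ⁅k, b⁆ = ⁅k, b⁆ * a := Subgroup.mem_center_iff.mp (hc k b) a
    rw [h1]; group

end Stmt12Aux

set_option maxHeartbeats 1000000 in
theorem stmt12 {G : Type*} [Group G] (p : ℕ) (hp : p.Prime)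
    (hG : Nat.card G = p ^ 5) [Group.IsNilpotent G]
    (hclass : Group.nilpotencyClass G = 2)
    (hcard : Nat.card (commutator G) = p ^ 2)
    (hexp : ∀ g ∈ commutator G, g ^ p = 1)
    (x y z : G) (hgen : Subgroup.closure {x, y, z} = ⊤) (hyz : ⁅y, z⁆ = 1)
    (hG' : commutator G = Subgroup.closure {⁅x, y⁆, ⁅x, z⁆}) :
    (∀ H : Subgroup G, Nat.card H = p ^ 2 → H ⊓ Subgroup.center G = ⊥ →
      ∃ c ∈ Subgroup.center G, ∃ d ∈ Subgroup.center G,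
        H = Subgroup.closure {y * c, z * d}) ∧
    (∀ H K : Subgroup G, Nat.card H = p ^ 2 → H ⊓ Subgroup.center G = ⊥ →
      Nat.card K = p ^ 2 → K ⊓ Subgroup.center G = ⊥ →
      ∀ h ∈ H, ∀ k ∈ K, h * k = k * h) := by
  haveI := Fact.mk hp
  haveI : Finite G := Nat.finite_of_card_ne_zero (by rw [hG]; exact pow_ne_zero 5 hp.pos.ne')
  -- commutators are central (class 2)
  have hc : ∀ g h : G, ⁅g, h⁆ ∈ Subgroup.center G := by
    intro g h
    rw [Subgroup.mem_center_iff]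
    intro t
    have hmem : ⁅⁅g, h⁆, t⁆ ∈ (⊤ : Subgroup G).lowerCentralSeries 2 := by
      rw [lowerCentralSeries_succ]
      apply Subgroup.subset_closure
      refine ⟨⁅g, h⁆, ?_, t, Subgroup.mem_top t, rfl⟩
      rw [lowerCentralSeries_one, commutator_def]
      exact Subgroup.commutator_mem_commutator (Subgroup.mem_top g) (Subgroup.mem_top h)
    have hbot : (⊤ : Subgroup G).lowerCentralSeries 2 = ⊥ := by
      rw [← hclass]; exact lowerCentralSeries_nilpotencyClass
    rw [hbot, Subgroup.mem_bot] at hmem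
    exact (commutatorElement_eq_one_iff_mul_comm.mp hmem).symm
  have hcomm_mem : ∀ g h : G, ⁅g, h⁆ ∈ commutator G := by
    intro g h
    rw [commutator_def]
    exact Subgroup.commutator_mem_commutator (Subgroup.mem_top g) (Subgroup.mem_top h)
  have hcp : ∀ g h : G, ⁅g, h⁆ ^ p = 1 := fun g h => hexp _ (hcomm_mem g h)
  have hgp : ∀ g : G, g ^ p ∈ Subgroup.center G := by
    intro g
    rw [Subgroup.mem_center_iff]
    intro t
    have h1 : ⁅g ^ p, t⁆ = ⁅g, t⁆ ^ p := (stmt12_commHomL hc t).map_pow g p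
    rw [hcp] at h1
    exact (commutatorElement_eq_one_iff_mul_comm.mp h1).symm
  -- the quotient by the center
  letI : CommGroup (G ⧸ Subgroup.center G) :=
    { (inferInstance : Group (G ⧸ Subgroup.center G)) with
      mul_comm := by
        intro q r
        refine QuotientGroup.induction_on q fun g => QuotientGroup.induction_on r fun h => ?_
        show ((g * h : G) : G ⧸ Subgroup.center G) = ((h * g : G) : G ⧸ Subgroup.center G)
        apply QuotientGroup.eq.mpr
        have he : (g * h)⁻¹ * (h * g) = ⁅h⁻¹, g⁻¹⁆ := by
          simp only [commutatorElement_def]; group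
        rw [he]; exact hc _ _ }
  set π : G →* G ⧸ Subgroup.center G := QuotientGroup.mk' (Subgroup.center G) with hπ
  have hker : ∀ g : G, π g = 1 ↔ g ∈ Subgroup.center G := fun g =>
    QuotientGroup.eq_one_iff g
  have hQp : ∀ g : G, π g ^ p = 1 := by
    intro g
    rw [← map_pow]
    exact (hker _).mpr (hgp g)
  have hQpz : ∀ g : G, π g ^ (p : ℤ) = 1 := fun g => by rw [zpow_natCast]; exact hQp g
  -- generators of the quotient
  have hgenQ : ∀ q : G ⧸ Subgroup.center G,
      q ∈ Subgroup.closure ({π x, π y, π z} : Set (G ⧸ Subgroup.center G)) := by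
    intro q
    have h1 : Subgroup.map π ⊤ = ⊤ := by
      rw [← MonoidHom.range_eq_map]
      exact MonoidHom.range_eq_top_of_surjective _ (QuotientGroup.mk'_surjective _)
    have h2 : Subgroup.map π (Subgroup.closure {x, y, z})
        = Subgroup.closure (π '' {x, y, z}) := MonoidHom.map_closure π _
    rw [hgen, h1] at h2
    have himg : π '' {x, y, z} = {π x, π y, π z} := by
      simp [Set.image_insert_eq]
    rw [himg] at h2
    rw [← h2]
    trivial
  -- normal form in the quotient
  have hformQ : ∀ q : G ⧸ Subgroup.center G,
      ∃ α β γ : ℤ, q = π x ^ α * π y ^ β * π z ^ γ := by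
    intro q
    refine Subgroup.closure_induction ?_ ?_ ?_ ?_ (hgenQ q)
    · intro g hg
      rcases hg with rfl | rfl | rfl
      · exact ⟨1, 0, 0, by group⟩
      · exact ⟨0, 1, 0, by group⟩
      · exact ⟨0, 0, 1, by group⟩
    · exact ⟨0, 0, 0, by group⟩
    · rintro u v _ _ ⟨a1, b1, c1, rfl⟩ ⟨a2, b2, c2, rfl⟩
      refine ⟨a1 + a2, b1 + b2, c1 + c2, ?_⟩
      rw [zpow_add, zpow_add, zpow_add]
      simp only [mul_comm, mul_left_comm, mul_assoc]
    · rintro u _ ⟨a1, b1, c1, rfl⟩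
      refine ⟨-a1, -b1, -c1, ?_⟩
      rw [zpow_neg, zpow_neg, zpow_neg]
      simp only [mul_inv_rev]
      simp only [mul_comm, mul_left_comm, mul_assoc]
  -- products of p-divisible powers are trivial in the quotient
  have honeQ : ∀ e1 e2 e3 : ℤ, (p:ℤ) ∣ e1 → (p:ℤ) ∣ e2 → (p:ℤ) ∣ e3 →
      π x ^ e1 * π y ^ e2 * π z ^ e3 = 1 := by
    rintro _ _ _ ⟨k1, rfl⟩ ⟨k2, rfl⟩ ⟨k3, rfl⟩
    rw [zpow_mul, zpow_mul, zpow_mul, hQpz, hQpz, hQpz, one_zpow, one_zpow, one_zpow,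
      mul_one, mul_one]
  -- independence of the two basic commutators
  have hcard_le : ∀ w : G, w ^ p = 1 → commutator G ≤ Subgroup.zpowers w → False := by
    intro w hw hle
    have h1 : Nat.card (commutator G) ≤ Nat.card (Subgroup.zpowers w) :=
      Subgroup.card_le_of_le hle
    rw [hcard, Nat.card_zpowers] at h1
    have h2 : orderOf w ≤ p := Nat.le_of_dvd hp.pos (orderOf_dvd_of_pow_eq_one hw)
    have h3 : p ^ 2 ≤ p := h1.trans h2
    rw [pow_two] at h3
    nlinarith [hp.two_le]
  have hcab : Commute ⁅x, y⁆ ⁅x, z⁆ := Subgroup.mem_center_iff.mp (hc x z) _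
  have hindep : ∀ m n : ℤ, ⁅x, y⁆ ^ m * ⁅x, z⁆ ^ n = 1 → (p:ℤ) ∣ m ∧ (p:ℤ) ∣ n := by
    intro m n hmn
    have hb1 : ⁅x, z⁆ ^ (p:ℤ) = 1 := by rw [zpow_natCast]; exact hcp x z
    have ha1 : ⁅x, y⁆ ^ (p:ℤ) = 1 := by rw [zpow_natCast]; exact hcp x y
    constructor
    · by_contra hpm
      have hcop : IsCoprime ((p:ℤ)) m := (Nat.prime_iff_prime_int.mp hp).coprime_iff_not_dvd.mpr
        (fun hd => hpm hd)
      obtain ⟨u, v, huv⟩ := hcop.symm  -- u * m + v * p = 1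
      have ham : ⁅x, y⁆ ^ m = (⁅x, z⁆ ^ n)⁻¹ := eq_inv_of_mul_eq_one_left hmn
      have hmem : ⁅x, y⁆ ∈ Subgroup.zpowers ⁅x, z⁆ := by
        have : ⁅x, y⁆ = (⁅x, y⁆ ^ m) ^ u * (⁅x, y⁆ ^ (p:ℤ)) ^ v := by
          rw [← zpow_mul, ← zpow_mul, ← zpow_add]
          rw [show m * u + (p:ℤ) * v = u * m + v * p by ring, huv, zpow_one]
        rw [this, ha1, one_zpow, mul_one, ham, ← zpow_neg, ← zpow_mul]
        exact Subgroup.zpow_mem _ (Subgroup.mem_zpowers _) _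
      refine hcard_le ⁅x, z⁆ (hcp x z) ?_
      rw [hG', Subgroup.closure_le]
      intro w hw
      rcases hw with rfl | rfl
      · exact hmem
      · exact Subgroup.mem_zpowers _
    · by_contra hpn
      have hcop : IsCoprime ((p:ℤ)) n := (Nat.prime_iff_prime_int.mp hp).coprime_iff_not_dvd.mpr
        (fun hd => hpn hd)
      obtain ⟨u, v, huv⟩ := hcop.symm
      have hbn : ⁅x, z⁆ ^ n = (⁅x, y⁆ ^ m)⁻¹ := by
        apply eq_inv_of_mul_eq_one_left
        rw [← (hcab.zpow_zpow m n).eq]; exact hmn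
      have hmem : ⁅x, z⁆ ∈ Subgroup.zpowers ⁅x, y⁆ := by
        have : ⁅x, z⁆ = (⁅x, z⁆ ^ n) ^ u * (⁅x, z⁆ ^ (p:ℤ)) ^ v := by
          rw [← zpow_mul, ← zpow_mul, ← zpow_add]
          rw [show n * u + (p:ℤ) * v = u * n + v * p by ring, huv, zpow_one]
        rw [this, hb1, one_zpow, mul_one, hbn, ← zpow_neg, ← zpow_mul]
        exact Subgroup.zpow_mem _ (Subgroup.mem_zpowers _) _
      refine hcard_le ⁅x, y⁆ (hcp x y) ?_
      rw [hG', Subgroup.closure_le]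
      intro w hw
      rcases hw with rfl | rfl
      · exact Subgroup.mem_zpowers _
      · exact hmem
  -- lifting normal forms from the quotient
  have hlift : ∀ (h : G) (α β γ : ℤ), π h = π x ^ α * π y ^ β * π z ^ γ →
      ∃ c ∈ Subgroup.center G, h = x ^ α * y ^ β * z ^ γ * c := by
    intro h α β γ hh
    refine ⟨(x ^ α * y ^ β * z ^ γ)⁻¹ * h, ?_, by group⟩
    rw [← hker, map_mul, map_inv, map_mul, map_mul, map_zpow, map_zpow, map_zpow, ← hh,
      inv_mul_cancel]
  -- the commutator formula
  have hxx : ⁅x, x⁆ = 1 := by simp only [commutatorElement_def]; group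
  have hyy : ⁅y, y⁆ = 1 := by simp only [commutatorElement_def]; group
  have hzz : ⁅z, z⁆ = 1 := by simp only [commutatorElement_def]; group
  have hzy : ⁅z, y⁆ = 1 := by rw [← commutatorElement_inv, hyz, inv_one]
  have commF : ∀ (h k : G) (α β γ α' β' γ' : ℤ),
      π h = π x ^ α * π y ^ β * π z ^ γ → π k = π x ^ α' * π y ^ β' * π z ^ γ' →
      ⁅h, k⁆ = ⁅x, y⁆ ^ (α * β' - α' * β) * ⁅x, z⁆ ^ (α * γ' - α' * γ) := by
    intro h k α β γ α' β' γ' hh hk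
    obtain ⟨c, hcZ, rfl⟩ := hlift h α β γ hh
    obtain ⟨c', hc'Z, rfl⟩ := hlift k α' β' γ' hk
    have hR : ∀ w : G, ⁅w, x ^ α' * y ^ β' * z ^ γ' * c'⁆
        = ⁅w, x⁆ ^ α' * ⁅w, y⁆ ^ β' * ⁅w, z⁆ ^ γ' := by
      intro w
      have hwc : ⁅w, c'⁆ = 1 :=
        commutatorElement_eq_one_iff_mul_comm.mpr (Subgroup.mem_center_iff.mp hc'Z w)
      have e := map_mul (stmt12_commHomR hc w) (x ^ α' * y ^ β' * z ^ γ') c'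
      simp only [stmt12_commHomR, MonoidHom.coe_mk, OneHom.coe_mk] at e
      rw [hwc, mul_one] at e
      rw [e]
      have e2 := map_mul (stmt12_commHomR hc w) (x ^ α' * y ^ β') (z ^ γ')
      have e3 := map_mul (stmt12_commHomR hc w) (x ^ α') (y ^ β')
      have e4 := map_zpow (stmt12_commHomR hc w) x α'
      have e5 := map_zpow (stmt12_commHomR hc w) y β'
      have e6 := map_zpow (stmt12_commHomR hc w) z γ'
      simp only [stmt12_commHomR, MonoidHom.coe_mk, OneHom.coe_mk] at e2 e3 e4 e5 e6
      rw [e2, e3, e4, e5, e6]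
    set k' := x ^ α' * y ^ β' * z ^ γ' * c' with hk'
    have e1 : ⁅x ^ α * y ^ β * z ^ γ * c, k'⁆ = ⁅x, k'⁆ ^ α * ⁅y, k'⁆ ^ β * ⁅z, k'⁆ ^ γ := by
      have hcc : ⁅c, k'⁆ = 1 :=
        commutatorElement_eq_one_iff_mul_comm.mpr (Subgroup.mem_center_iff.mp hcZ k').symm
      have e := map_mul (stmt12_commHomL hc k') (x ^ α * y ^ β * z ^ γ) c
      simp only [stmt12_commHomL, MonoidHom.coe_mk, OneHom.coe_mk] at e
      rw [hcc, mul_one] at e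
      rw [e]
      have e2 := map_mul (stmt12_commHomL hc k') (x ^ α * y ^ β) (z ^ γ)
      have e3 := map_mul (stmt12_commHomL hc k') (x ^ α) (y ^ β)
      have e4 := map_zpow (stmt12_commHomL hc k') x α
      have e5 := map_zpow (stmt12_commHomL hc k') y β
      have e6 := map_zpow (stmt12_commHomL hc k') z γ
      simp only [stmt12_commHomL, MonoidHom.coe_mk, OneHom.coe_mk] at e2 e3 e4 e5 e6
      rw [e2, e3, e4, e5, e6]
    rw [e1, hR x, hR y, hR z]
    rw [hxx, hyy, hzz, hyz, hzy]
    rw [show ⁅y, x⁆ = ⁅x, y⁆⁻¹ from (commutatorElement_inv x y).symm]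
    rw [show ⁅z, x⁆ = ⁅x, z⁆⁻¹ from (commutatorElement_inv x z).symm]
    simp only [one_zpow, mul_one, one_mul]
    rw [(hcab.zpow_zpow β' γ').mul_zpow α, ← zpow_mul, ← zpow_mul]
    rw [inv_zpow', ← zpow_mul, inv_zpow', ← zpow_mul]
    have hswap : ⁅x, z⁆ ^ (γ' * α) * ⁅x, y⁆ ^ (-α' * β) = ⁅x, y⁆ ^ (-α' * β) * ⁅x, z⁆ ^ (γ' * α) :=
      (hcab.symm.zpow_zpow _ _).eq
    calc ⁅x, y⁆ ^ (β' * α) * ⁅x, z⁆ ^ (γ' * α) * ⁅x, y⁆ ^ (-α' * β) * ⁅x, z⁆ ^ (-α' * γ)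
        = ⁅x, y⁆ ^ (β' * α) * (⁅x, z⁆ ^ (γ' * α) * ⁅x, y⁆ ^ (-α' * β)) * ⁅x, z⁆ ^ (-α' * γ) := by
          group
      _ = ⁅x, y⁆ ^ (β' * α) * (⁅x, y⁆ ^ (-α' * β) * ⁅x, z⁆ ^ (γ' * α)) * ⁅x, z⁆ ^ (-α' * γ) := by
          rw [hswap]
      _ = (⁅x, y⁆ ^ (β' * α) * ⁅x, y⁆ ^ (-α' * β)) * (⁅x, z⁆ ^ (γ' * α) * ⁅x, z⁆ ^ (-α' * γ)) := by
          group
      _ = ⁅x, y⁆ ^ (β' * α + -α' * β) * ⁅x, z⁆ ^ (γ' * α + -α' * γ) := by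
          rw [← zpow_add, ← zpow_add]
      _ = ⁅x, y⁆ ^ (α * β' - α' * β) * ⁅x, z⁆ ^ (α * γ' - α' * γ) := by
          rw [show β' * α + -α' * β = α * β' - α' * β by ring,
            show γ' * α + -α' * γ = α * γ' - α' * γ by ring]
  -- if all exponent differences are divisible by p, quotient elements are powers
  have hpow_eq : ∀ (h k : G) (α β γ α' β' γ' t : ℤ),
      π h = π x ^ α * π y ^ β * π z ^ γ → π k = π x ^ α' * π y ^ β' * π z ^ γ' →
      (p:ℤ) ∣ α * t - α' → (p:ℤ) ∣ β * t - β' → (p:ℤ) ∣ γ * t - γ' →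
      π k = π h ^ t := by
    intro h k α β γ α' β' γ' t hh hk d1 d2 d3
    obtain ⟨j1, hj1⟩ := d1
    obtain ⟨j2, hj2⟩ := d2
    obtain ⟨j3, hj3⟩ := d3
    rw [hk, hh]
    rw [show α' = α * t - (p:ℤ) * j1 by linarith, show β' = β * t - (p:ℤ) * j2 by linarith,
      show γ' = γ * t - (p:ℤ) * j3 by linarith]
    rw [mul_zpow, mul_zpow]
    rw [zpow_sub, zpow_sub, zpow_sub, zpow_mul, zpow_mul, zpow_mul, zpow_mul, zpow_mul, zpow_mul,
      hQpz, hQpz, hQpz, one_zpow, one_zpow, one_zpow, inv_one, mul_one, mul_one, mul_one]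
  -- ZMod p solving of the linear conditions
  have hsolve : ∀ a b c a' b' c' : ℤ, ¬ (p:ℤ) ∣ a → (p:ℤ) ∣ (a * b' - a' * b) →
      (p:ℤ) ∣ (a * c' - a' * c) →
      ∃ t : ℤ, (p:ℤ) ∣ a * t - a' ∧ (p:ℤ) ∣ b * t - b' ∧ (p:ℤ) ∣ c * t - c' := by
    intro a b c a' b' c' hpa hD1 hD2
    have hA : (a : ZMod p) ≠ 0 := fun h0 => hpa ((ZMod.intCast_zmod_eq_zero_iff_dvd a p).mp h0)
    have hAA : (a : ZMod p)⁻¹ * a = 1 := inv_mul_cancel₀ hA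
    have hr1 : (a : ZMod p) * b' = a' * b := by
      have h0 := (ZMod.intCast_zmod_eq_zero_iff_dvd _ p).mpr hD1
      push_cast at h0
      linear_combination h0
    have hr2 : (a : ZMod p) * c' = a' * c := by
      have h0 := (ZMod.intCast_zmod_eq_zero_iff_dvd _ p).mpr hD2
      push_cast at h0
      linear_combination h0
    refine ⟨(((a' : ZMod p) * (a : ZMod p)⁻¹).val : ℤ), ?_, ?_, ?_⟩
    · rw [← ZMod.intCast_zmod_eq_zero_iff_dvd]
      push_cast [ZMod.natCast_val, ZMod.cast_id]
      linear_combination ((a' : ZMod p)) * hAA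
    · rw [← ZMod.intCast_zmod_eq_zero_iff_dvd]
      push_cast [ZMod.natCast_val, ZMod.cast_id]
      linear_combination (-((a : ZMod p)⁻¹)) * hr1 + ((b' : ZMod p)) * hAA
    · rw [← ZMod.intCast_zmod_eq_zero_iff_dvd]
      push_cast [ZMod.natCast_val, ZMod.cast_id]
      linear_combination (-((a : ZMod p)⁻¹)) * hr2 + ((c' : ZMod p)) * hAA
  -- a subgroup of order p^2 is not contained in a cyclic group generated by a p-torsion element
  have hnotle : ∀ (H : Subgroup G) (h : G), Nat.card H = p ^ 2 → h ^ p = 1 →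
      ¬ H ≤ Subgroup.zpowers h := by
    intro H h hHc hh hle
    have h1 : Nat.card H ≤ Nat.card (Subgroup.zpowers h) := Subgroup.card_le_of_le hle
    rw [hHc, Nat.card_zpowers] at h1
    have h2 : orderOf h ≤ p := Nat.le_of_dvd hp.pos (orderOf_dvd_of_pow_eq_one hh)
    have h3 : p ^ 2 ≤ p := h1.trans h2
    rw [pow_two] at h3
    nlinarith [hp.two_le]
  -- recognizing zpowers from the quotient
  have hzpow_of : ∀ (H : Subgroup G), H ⊓ Subgroup.center G = ⊥ →
      ∀ h k : G, h ∈ H → k ∈ H → ∀ t : ℤ, π k = π h ^ t → k ∈ Subgroup.zpowers h := by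
    intro H hHZ h k hh hk t ht
    have h1 : k * (h ^ t)⁻¹ ∈ Subgroup.center G := by
      rw [← hker, map_mul, map_inv, map_zpow, ht, mul_inv_cancel]
    have h2 : k * (h ^ t)⁻¹ ∈ H := H.mul_mem hk (H.inv_mem (H.zpow_mem hh t))
    have h3 : k * (h ^ t)⁻¹ ∈ H ⊓ Subgroup.center G := ⟨h2, h1⟩
    rw [hHZ, Subgroup.mem_bot] at h3
    exact ⟨t, (mul_inv_eq_one.mp h3).symm⟩
  -- key lemma: elements of such subgroups have no x-component
  have keyL : ∀ H : Subgroup G, Nat.card H = p ^ 2 → H ⊓ Subgroup.center G = ⊥ →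
      ∀ h ∈ H, ∃ β γ : ℤ, π h = π y ^ β * π z ^ γ := by
    intro H hHc hHZ h hh
    have hmem_triv : ∀ g ∈ H, g ∈ Subgroup.center G → g = 1 := by
      intro g hg hgZ
      have hm : g ∈ H ⊓ Subgroup.center G := ⟨hg, hgZ⟩
      rwa [hHZ, Subgroup.mem_bot] at hm
    have hpow1 : ∀ g ∈ H, g ^ p = 1 := fun g hg => hmem_triv _ (H.pow_mem hg p) (hgp g)
    obtain ⟨α, β, γ, hform⟩ := hformQ (π h)
    by_cases hpα : (p:ℤ) ∣ α
    · refine ⟨β, γ, ?_⟩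
      obtain ⟨j, hj⟩ := hpα
      rw [hform, hj, zpow_mul, hQpz, one_zpow, one_mul]
    · exfalso
      obtain ⟨k, hkH, hknot⟩ :=
        SetLike.not_le_iff_exists.mp (hnotle H h hHc (hpow1 h hh))
      obtain ⟨α', β', γ', hformk⟩ := hformQ (π k)
      have hcomm_hk : ⁅h, k⁆ = 1 := by
        rw [commutatorElement_eq_one_iff_mul_comm]
        have hcs := IsPGroup.commutative_of_card_eq_prime_sq (p := p) hHc ⟨h, hh⟩ ⟨k, hkH⟩
        exact congrArg Subtype.val hcs
      rw [commF h k α β γ α' β' γ' hform hformk] at hcomm_hk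
      obtain ⟨hd1, hd2⟩ := hindep _ _ hcomm_hk
      obtain ⟨t, e1, e2, e3⟩ := hsolve α β γ α' β' γ' hpα hd1 hd2
      exact hknot (hzpow_of H hHZ h k hh hkH t (hpow_eq h k α β γ α' β' γ' t hform hformk e1 e2 e3))
  constructor
  · -- part 1: finding the generators
    intro H hHc hHZ
    have hmem_triv : ∀ g ∈ H, g ∈ Subgroup.center G → g = 1 := by
      intro g hg hgZ
      have hm : g ∈ H ⊓ Subgroup.center G := ⟨hg, hgZ⟩
      rwa [hHZ, Subgroup.mem_bot] at hm
    have hpow1 : ∀ g ∈ H, g ^ p = 1 := fun g hg => hmem_triv _ (H.pow_mem hg p) (hgp g)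
    -- a nontrivial element h₁
    have hHne : H ≠ ⊥ := by
      intro hb
      rw [hb, Subgroup.card_bot] at hHc
      nlinarith [hp.two_le]
    obtain ⟨⟨h₁, hh₁H⟩, hh₁ne⟩ := Subgroup.ne_bot_iff_exists_ne_one.mp hHne
    have hh₁ne' : h₁ ≠ 1 := fun e => hh₁ne (Subtype.ext e)
    obtain ⟨β₁, γ₁, hf1⟩ := keyL H hHc hHZ h₁ hh₁H
    -- an element h₂ outside ⟨h₁⟩
    obtain ⟨h₂, hh₂H, hh₂notin⟩ :=
      SetLike.not_le_iff_exists.mp (hnotle H h₁ hHc (hpow1 h₁ hh₁H))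
    obtain ⟨β₂, γ₂, hf2⟩ := keyL H hHc hHZ h₂ hh₂H
    have hf1' : π h₁ = π x ^ (0:ℤ) * π y ^ β₁ * π z ^ γ₁ := by rw [hf1]; group
    have hf2' : π h₂ = π x ^ (0:ℤ) * π y ^ β₂ * π z ^ γ₂ := by rw [hf2]; group
    -- (β₁, γ₁) is nonzero mod p
    have hne0 : ¬ ((p:ℤ) ∣ β₁ ∧ (p:ℤ) ∣ γ₁) := by
      rintro ⟨d1, d2⟩
      have h0 : π h₁ = 1 := by
        rw [hf1']
        exact honeQ 0 β₁ γ₁ ⟨0, by ring⟩ d1 d2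
      exact hh₁ne' (hmem_triv h₁ hh₁H ((hker h₁).mp h0))
    -- the determinant is invertible mod p
    have hdet : ¬ (p:ℤ) ∣ (β₁ * γ₂ - β₂ * γ₁) := by
      intro hD
      apply hh₂notin
      by_cases hpβ : (p:ℤ) ∣ β₁
      · have hpγ : ¬ (p:ℤ) ∣ γ₁ := fun hg => hne0 ⟨hpβ, hg⟩
        obtain ⟨t, e1, e2, e3⟩ := hsolve γ₁ β₁ 0 γ₂ β₂ 0
          hpγ (by have : γ₁ * β₂ - γ₂ * β₁ = -(β₁ * γ₂ - β₂ * γ₁) := by ring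
                  rw [this]; exact hD.neg_right)
          (by simp)
        refine hzpow_of H hHZ h₁ h₂ hh₁H hh₂H t
          (hpow_eq h₁ h₂ 0 β₁ γ₁ 0 β₂ γ₂ t hf1' hf2' (by simp) e2 e1)
      · obtain ⟨t, e1, e2, e3⟩ := hsolve β₁ γ₁ 0 β₂ γ₂ 0 hpβ hD (by simp)
        refine hzpow_of H hHZ h₁ h₂ hh₁H hh₂H t
          (hpow_eq h₁ h₂ 0 β₁ γ₁ 0 β₂ γ₂ t hf1' hf2' (by simp) e1 e2)
    -- invert the determinant mod p
    have hD0 : ((β₁ : ZMod p) * γ₂ - β₂ * γ₁) ≠ 0 := by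
      have h0 : ((β₁ * γ₂ - β₂ * γ₁ : ℤ) : ZMod p) ≠ 0 :=
        fun h0 => hdet ((ZMod.intCast_zmod_eq_zero_iff_dvd _ p).mp h0)
      push_cast at h0
      exact h0
    have hDD' : ((β₁ : ZMod p) * γ₂ - β₂ * γ₁) * ((β₁ : ZMod p) * γ₂ - β₂ * γ₁)⁻¹ = 1 :=
      mul_inv_cancel₀ hD0
    set u1 : ℤ := ((((γ₂ : ZMod p)) * ((β₁ : ZMod p) * γ₂ - β₂ * γ₁)⁻¹).val : ℤ) with hu1
    set v1 : ℤ := (((-(γ₁ : ZMod p)) * ((β₁ : ZMod p) * γ₂ - β₂ * γ₁)⁻¹).val : ℤ) with hv1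
    set u2 : ℤ := (((-(β₂ : ZMod p)) * ((β₁ : ZMod p) * γ₂ - β₂ * γ₁)⁻¹).val : ℤ) with hu2
    set v2 : ℤ := ((((β₁ : ZMod p)) * ((β₁ : ZMod p) * γ₂ - β₂ * γ₁)⁻¹).val : ℤ) with hv2
    set e : G := h₁ ^ u1 * h₂ ^ v1 with he
    set f : G := h₁ ^ u2 * h₂ ^ v2 with hf
    have heH : e ∈ H := H.mul_mem (H.zpow_mem hh₁H u1) (H.zpow_mem hh₂H v1)
    have hfH : f ∈ H := H.mul_mem (H.zpow_mem hh₁H u2) (H.zpow_mem hh₂H v2)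
    -- π e = π y and π f = π z
    have hπe_form : π e = π x ^ (0:ℤ) * π y ^ (β₁ * u1 + β₂ * v1) * π z ^ (γ₁ * u1 + γ₂ * v1) := by
      rw [he, map_mul, map_zpow, map_zpow, hf1, hf2]
      rw [mul_zpow, mul_zpow, ← zpow_mul, ← zpow_mul, ← zpow_mul, ← zpow_mul,
        zpow_add, zpow_add, zpow_zero, one_mul]
      rw [show π y ^ (β₁ * u1) * π z ^ (γ₁ * u1) * (π y ^ (β₂ * v1) * π z ^ (γ₂ * v1))
          = π y ^ (β₁ * u1) * π y ^ (β₂ * v1) * (π z ^ (γ₁ * u1) * π z ^ (γ₂ * v1)) from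
        mul_mul_mul_comm _ _ _ _]
    have hπf_form : π f = π x ^ (0:ℤ) * π y ^ (β₁ * u2 + β₂ * v2) * π z ^ (γ₁ * u2 + γ₂ * v2) := by
      rw [hf, map_mul, map_zpow, map_zpow, hf1, hf2]
      rw [mul_zpow, mul_zpow, ← zpow_mul, ← zpow_mul, ← zpow_mul, ← zpow_mul,
        zpow_add, zpow_add, zpow_zero, one_mul]
      rw [show π y ^ (β₁ * u2) * π z ^ (γ₁ * u2) * (π y ^ (β₂ * v2) * π z ^ (γ₂ * v2))
          = π y ^ (β₁ * u2) * π y ^ (β₂ * v2) * (π z ^ (γ₁ * u2) * π z ^ (γ₂ * v2)) from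
        mul_mul_mul_comm _ _ _ _]
    have hπy_form : π y = π x ^ (0:ℤ) * π y ^ (1:ℤ) * π z ^ (0:ℤ) := by group
    have hπz_form : π z = π x ^ (0:ℤ) * π y ^ (0:ℤ) * π z ^ (1:ℤ) := by group
    have k1 : (p:ℤ) ∣ (β₁ * u1 + β₂ * v1) * 1 - 1 := by
      rw [← ZMod.intCast_zmod_eq_zero_iff_dvd, hu1, hv1]
      push_cast [ZMod.natCast_val, ZMod.cast_id]
      linear_combination hDD'
    have k2 : (p:ℤ) ∣ (γ₁ * u1 + γ₂ * v1) * 1 - 0 := by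
      rw [← ZMod.intCast_zmod_eq_zero_iff_dvd, hu1, hv1]
      push_cast [ZMod.natCast_val, ZMod.cast_id]
      ring
    have k3 : (p:ℤ) ∣ (β₁ * u2 + β₂ * v2) * 1 - 0 := by
      rw [← ZMod.intCast_zmod_eq_zero_iff_dvd, hu2, hv2]
      push_cast [ZMod.natCast_val, ZMod.cast_id]
      ring
    have k4 : (p:ℤ) ∣ (γ₁ * u2 + γ₂ * v2) * 1 - 1 := by
      rw [← ZMod.intCast_zmod_eq_zero_iff_dvd, hu2, hv2]
      push_cast [ZMod.natCast_val, ZMod.cast_id]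
      linear_combination hDD'
    have hπe : π e = π y := by
      have h0 := hpow_eq e y 0 (β₁ * u1 + β₂ * v1) (γ₁ * u1 + γ₂ * v1) 0 1 0 1
        hπe_form hπy_form (by simp) k1 k2
      rw [h0, zpow_one]
    have hπf : π f = π z := by
      have h0 := hpow_eq f z 0 (β₁ * u2 + β₂ * v2) (γ₁ * u2 + γ₂ * v2) 0 0 1 1
        hπf_form hπz_form (by simp) k3 k4
      rw [h0, zpow_one]
    -- the central corrections
    have hcZ : y⁻¹ * e ∈ Subgroup.center G := by
      rw [← hker, map_mul, map_inv, hπe, inv_mul_cancel]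
    have hdZ : z⁻¹ * f ∈ Subgroup.center G := by
      rw [← hker, map_mul, map_inv, hπf, inv_mul_cancel]
    refine ⟨y⁻¹ * e, hcZ, z⁻¹ * f, hdZ, ?_⟩
    have hey : y * (y⁻¹ * e) = e := by group
    have hfz : z * (z⁻¹ * f) = f := by group
    rw [show ({y * (y⁻¹ * e), z * (z⁻¹ * f)} : Set G) = {e, f} by rw [hey, hfz]]
    apply le_antisymm
    · intro g hg
      obtain ⟨β, γ, hfg⟩ := keyL H hHc hHZ g hg
      have hgef : g = e ^ β * f ^ γ := by
        have h1 : g * (e ^ β * f ^ γ)⁻¹ ∈ Subgroup.center G := by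
          rw [← hker, map_mul, map_inv, map_mul, map_zpow, map_zpow, hπe, hπf, ← hfg,
            mul_inv_cancel]
        have h2 : g * (e ^ β * f ^ γ)⁻¹ ∈ H :=
          H.mul_mem hg (H.inv_mem (H.mul_mem (H.zpow_mem heH β) (H.zpow_mem hfH γ)))
        have h3 := hmem_triv _ h2 h1
        rw [mul_inv_eq_one] at h3
        exact h3
      rw [hgef]
      exact Subgroup.mul_mem _
        (Subgroup.zpow_mem _ (Subgroup.subset_closure (by simp)) β)
        (Subgroup.zpow_mem _ (Subgroup.subset_closure (by simp)) γ)
    · rw [Subgroup.closure_le]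
      intro g hg
      rcases hg with rfl | rfl
      · exact heH
      · exact hfH
  · -- part 2: elementwise commutation
    intro H K hHc hHZ hKc hKZ h hh k hk
    obtain ⟨β, γ, hfh⟩ := keyL H hHc hHZ h hh
    obtain ⟨β', γ', hfk⟩ := keyL K hKc hKZ k hk
    rw [← commutatorElement_eq_one_iff_mul_comm]
    have h0 := commF h k 0 β γ 0 β' γ' (by rw [hfh]; group) (by rw [hfk]; group)
    rw [h0]
    norm_num
end

section
/- Let p be a prime and let G be a finite p-group with |G'| = p. Then the index |G : Z(G)| is an even power of p. -/
open Subgroup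
open scoped commutatorElement

section Helpers

universe u

variable {G : Type u} [Group G]

/-- Commutation with a fixed element, as a hom into the commutator subgroup,
when the commutator subgroup is central. -/
def commHom (hc : commutator G ≤ Subgroup.center G) (x : G) : G →* commutator G where
  toFun g := ⟨⁅x, g⁆, commutator_def G ▸
    Subgroup.commutator_mem_commutator (mem_top x) (mem_top g)⟩
  map_one' := by
    ext
    show ⁅x, (1 : G)⁆ = 1
    group
  map_mul' g h := by
    ext
    show ⁅x, g * h⁆ = ⁅x, g⁆ * ⁅x, h⁆
    have h1 : g * ⁅x, h⁆ = ⁅x, h⁆ * g :=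
      Subgroup.mem_center_iff.mp (hc (commutator_def G ▸
        Subgroup.commutator_mem_commutator (mem_top x) (mem_top h))) g
    calc ⁅x, g * h⁆ = ⁅x, g⁆ * (g * ⁅x, h⁆ * g⁻¹) := by group
      _ = ⁅x, g⁆ * (⁅x, h⁆ * g * g⁻¹) := by rw [h1]
      _ = ⁅x, g⁆ * ⁅x, h⁆ := by group

@[simp] lemma commHom_apply (hc : commutator G ≤ Subgroup.center G) (x g : G) :
    ((commHom hc x g : commutator G) : G) = ⁅x, g⁆ := rfl

lemma ker_commHom (hc : commutator G ≤ Subgroup.center G) (x : G) :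
    (commHom hc x).ker = Subgroup.centralizer {x} := by
  ext g
  rw [MonoidHom.mem_ker, Subgroup.mem_centralizer_singleton_iff]
  rw [Subtype.ext_iff]
  show ⁅x, g⁆ = 1 ↔ _
  rw [commutatorElement_eq_one_iff_mul_comm]
  exact ⟨fun h => h.symm, fun h => h.symm⟩

lemma card_range_eq_prime {p : ℕ} (hp : p.Prime) {Δ : Type*} [Group Δ] [Finite Δ]
    (hΔ : Nat.card Δ = p) (f : G →* Δ) (g : G) (hg : f g ≠ 1) :
    Nat.card f.range = p := by
  have hdvd : Nat.card f.range ∣ p := hΔ ▸ Subgroup.card_subgroup_dvd_card f.range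
  rcases (Nat.dvd_prime hp).mp hdvd with h | h
  · exfalso
    have : f.range = ⊥ := Subgroup.card_eq_one.mp h
    exact hg (Subgroup.mem_bot.mp (this ▸ MonoidHom.mem_range.mpr ⟨g, rfl⟩))
  · exact h

/-- A commutator subgroup of order `p` in a finite `p`-group is central. -/
lemma comm_central [Finite G] {p : ℕ} (hp : p.Prime) (hpG : IsPGroup p G)
    (hG' : Nat.card (commutator G) = p) : commutator G ≤ Subgroup.center G := by
  haveI : Fact p.Prime := ⟨hp⟩
  have hconj : IsPGroup p (ConjAct G) := hpG.of_equiv ConjAct.toConjAct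
  have key := hconj.card_modEq_card_fixedPoints (↥(commutator G))
  rw [hG'] at key
  set F := MulAction.fixedPoints (ConjAct G) ↥(commutator G) with hF
  have hone : (1 : ↥(commutator G)) ∈ F := fun g => smul_one _
  have h0 : p ∣ Nat.card F :=
    Nat.modEq_zero_iff_dvd.mp (key.symm.trans (Nat.modEq_zero_iff_dvd.mpr dvd_rfl))
  have h1 : Nat.card F ≤ p := by
    rw [← hG']
    exact Nat.card_le_card_of_injective _ Subtype.val_injective
  have h2 : 0 < Nat.card F := Nat.card_pos_iff.mpr ⟨⟨1, hone⟩, inferInstance⟩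
  have hcardF : Nat.card F = p := le_antisymm h1 (Nat.le_of_dvd h2 h0)
  have hbij : Function.Bijective (Subtype.val : F → ↥(commutator G)) :=
    (Nat.bijective_iff_injective_and_card _).mpr
      ⟨Subtype.val_injective, by rw [hcardF, hG']⟩
  intro m hm
  rw [Subgroup.mem_center_iff]
  intro g
  obtain ⟨w, hw⟩ := hbij.2 ⟨m, hm⟩
  have hfix := w.2 (ConjAct.toConjAct g)
  rw [hw] at hfix
  have hval : g * m * g⁻¹ = m := by
    have := congrArg (Subtype.val) hfix
    rw [ConjAct.Subgroup.val_conj_smul, ConjAct.smul_def, ConjAct.ofConjAct_toConjAct] at this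
    exact this
  calc g * m = (g * m * g⁻¹) * g := by group
    _ = m * g := by rw [hval]

theorem aux {p : ℕ} (hp : p.Prime) (n : ℕ) :
    ∀ (G : Type u) [Group G] [Finite G], Nat.card G = n → IsPGroup p G →
      Nat.card (commutator G) ∣ p →
      ∃ k : ℕ, (Subgroup.center G).index = p ^ (2 * k) := by
  induction n using Nat.strong_induction_on with
  | _ n IH =>
    intro G _ _ hcard hpG hdvd
    rcases (Nat.dvd_prime hp).mp hdvd with h1 | h1
    · -- commutator trivial: G abelian
      refine ⟨0, ?_⟩
      rw [mul_zero, pow_zero, Subgroup.index_eq_one, eq_top_iff]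
      intro g _
      rw [Subgroup.mem_center_iff]
      intro h
      have hbot : commutator G = ⊥ := Subgroup.card_eq_one.mp h1
      have hmem : ⁅h, g⁆ ∈ commutator G := commutator_def G ▸
        Subgroup.commutator_mem_commutator (mem_top h) (mem_top g)
      rw [hbot, Subgroup.mem_bot] at hmem
      exact commutatorElement_eq_one_iff_mul_comm.mp hmem
    · -- commutator has order p
      have hc : commutator G ≤ Subgroup.center G := comm_central hp hpG h1
      have hne : Subgroup.center G ≠ ⊤ := by
        intro htop
        have hbot : commutator G = ⊥ := by
          rw [_root_.commutator_def G, eq_bot_iff, Subgroup.commutator_le]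
          intro a _ b _
          rw [Subgroup.mem_bot, commutatorElement_eq_one_iff_mul_comm]
          exact (Subgroup.mem_center_iff.mp (htop ▸ Subgroup.mem_top a) b).symm
        rw [hbot, Subgroup.card_bot] at h1
        exact hp.one_lt.ne h1
      obtain ⟨x, hx⟩ : ∃ x, x ∉ Subgroup.center G := by
        by_contra h
        push_neg at h
        exact hne (Subgroup.eq_top_iff' _ |>.mpr h)
      obtain ⟨y, hy⟩ : ∃ y, x * y ≠ y * x := by
        by_contra h
        push_neg at h
        exact hx (Subgroup.mem_center_iff.mpr fun g => (h g).symm)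
      have hxy : ⁅x, y⁆ ≠ 1 := fun h => hy (commutatorElement_eq_one_iff_mul_comm.mp h)
      set φ := commHom hc x with hφ
      set ψ := commHom hc y with hψ
      have hφy : φ y ≠ 1 := by
        intro h
        exact hxy (Subtype.ext_iff.mp h)
      have hψx : ψ x ≠ 1 := by
        intro h
        have : ⁅y, x⁆ = 1 := Subtype.ext_iff.mp h
        exact hy (commutatorElement_eq_one_iff_mul_comm.mp this).symm
      set Cx := Subgroup.centralizer {x} with hCxd
      set Cy := Subgroup.centralizer {y} with hCyd
      set H := Cx ⊓ Cy with hHd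
      have hxCx : x ∈ Cx := Subgroup.mem_centralizer_singleton_iff.mpr rfl
      have hCx : Cx.index = p := by
        rw [hCxd, ← ker_commHom hc x, Subgroup.index_ker]
        exact card_range_eq_prime hp h1 φ y hφy
      have hrel : H.relIndex Cx = p := by
        rw [hHd, Subgroup.inf_relIndex_left]
        show (Cy.subgroupOf Cx).index = p
        rw [hCyd, ← ker_commHom hc y, ← MonoidHom.ker_domRestrict, Subgroup.index_ker]
        exact card_range_eq_prime hp h1 (ψ.domRestrict Cx) ⟨x, hxCx⟩ hψx
      have hHle : H ≤ Cx := inf_le_left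
      have hHidx : H.index = p ^ 2 := by
        rw [← Subgroup.relIndex_mul_index hHle, hrel, hCx, sq]
      have hZle : Subgroup.center G ≤ H := by
        intro z hz
        rw [hHd, Subgroup.mem_inf]
        constructor <;>
          exact Subgroup.mem_centralizer_singleton_iff.mpr
            (Subgroup.mem_center_iff.mp hz _).symm
      -- decomposition of any element of G
      have horder : ∀ c : ↥(commutator G), c ≠ 1 → Subgroup.zpowers c = ⊤ := by
        intro c hcne
        apply Subgroup.eq_top_of_card_eq
        rw [Nat.card_zpowers, h1]
        have hdvd' : orderOf c ∣ p := h1 ▸ orderOf_dvd_natCard c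
        rcases (Nat.dvd_prime hp).mp hdvd' with h | h
        · exact absurd (orderOf_eq_one_iff.mp h) hcne
        · exact h
      have hgen : ∀ g : G, ∃ (h : G) (m k : ℤ), h ∈ H ∧ g = h * x ^ m * y ^ k := by
        intro g
        obtain ⟨k1, hk1⟩ := Subgroup.mem_zpowers_iff.mp
          ((horder (φ y) hφy) ▸ Subgroup.mem_top (φ g))
        have hg1 : g * y ^ (-k1) ∈ Cx := by
          rw [hCxd, ← ker_commHom hc x, MonoidHom.mem_ker, map_mul, map_zpow, ← hφ, ← hk1,
            ← zpow_add, add_neg_cancel, zpow_zero]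
        obtain ⟨k2, hk2⟩ := Subgroup.mem_zpowers_iff.mp
          ((horder (ψ x) hψx) ▸ Subgroup.mem_top (ψ (g * y ^ (-k1))))
        have hg2 : g * y ^ (-k1) * x ^ (-k2) ∈ Cy := by
          rw [hCyd, ← ker_commHom hc y, MonoidHom.mem_ker, map_mul, map_zpow, ← hψ, ← hk2,
            ← zpow_add, add_neg_cancel, zpow_zero]
        have hg2x : g * y ^ (-k1) * x ^ (-k2) ∈ Cx :=
          mul_mem hg1 (Subgroup.zpow_mem Cx hxCx _)
        refine ⟨g * y ^ (-k1) * x ^ (-k2), k2, k1,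
          (Subgroup.mem_inf).mpr ⟨hg2x, hg2⟩, by group⟩
      -- the center of H equals the center of G
      have hkey : Subgroup.center ↥H = (Subgroup.center G).subgroupOf H := by
        ext z
        rw [Subgroup.mem_subgroupOf]
        constructor
        · intro hzc
          rw [Subgroup.mem_center_iff]
          intro g
          obtain ⟨h, m, k, hhH, hdec⟩ := hgen g
          have hzx : Commute x (z : G) :=
            Subgroup.mem_centralizer_singleton_iff.mp
              ((Subgroup.mem_inf.mp z.2).1) |>.symm
          have hzy : Commute y (z : G) :=
            Subgroup.mem_centralizer_singleton_iff.mp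
              ((Subgroup.mem_inf.mp z.2).2) |>.symm
          have hzh : Commute h (z : G) :=
            Subtype.ext_iff.mp (Subgroup.mem_center_iff.mp hzc ⟨h, hhH⟩)
          have : Commute g (z : G) := by
            rw [hdec]
            exact (hzh.mul_left (hzx.zpow_left m)).mul_left (hzy.zpow_left k)
          exact this
        · intro hzc
          rw [Subgroup.mem_center_iff]
          intro w
          exact Subtype.ext (Subgroup.mem_center_iff.mp hzc w)
      -- apply the induction hypothesis to H
      have hHcomm : Nat.card (commutator ↥H) ∣ p := by
        have e : Nat.card (commutator ↥H) = Nat.card ((commutator ↥H).map H.subtype) :=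
          Nat.card_congr (Subgroup.equivMapOfInjective _ _ H.subtype_injective).toEquiv
        rw [e, ← h1]
        refine Subgroup.card_dvd_of_le ?_
        rw [_root_.commutator_def ↥H, Subgroup.map_commutator, _root_.commutator_def G]
        exact Subgroup.commutator_mono le_top le_top
      have hidx1 : 1 < H.index := by
        rw [hHidx]
        exact Nat.one_lt_pow two_ne_zero hp.one_lt
      have hlt : Nat.card ↥H < n := by
        calc Nat.card ↥H = Nat.card ↥H * 1 := (mul_one _).symm
          _ < Nat.card ↥H * H.index := (mul_lt_mul_iff_right₀ Nat.card_pos).mpr hidx1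
          _ = Nat.card G := H.card_mul_index
          _ = n := hcard
      obtain ⟨k, hk⟩ := IH (Nat.card ↥H) hlt ↥H rfl (hpG.to_subgroup H) hHcomm
      refine ⟨k + 1, ?_⟩
      have hrelZ : (Subgroup.center G).relIndex H = p ^ (2 * k) := by
        show ((Subgroup.center G).subgroupOf H).index = _
        rw [← hkey]
        exact hk
      rw [← Subgroup.relIndex_mul_index hZle, hrelZ, hHidx]
      ring

end Helpers

theorem stmt13 {G : Type*} [Group G] [Finite G] (p : ℕ) (hp : p.Prime)
    (hpG : IsPGroup p G) (hG' : Nat.card (commutator G) = p) :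
    ∃ k : ℕ, (Subgroup.center G).index = p ^ (2 * k) := by
  exact aux hp (Nat.card G) G rfl hpG (hG' ▸ dvd_rfl)
end
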